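/- arXiv:1104.5646 — 4 statements merged into one kernel-verified Lean document; each statement's English description precedes it below -/
import Mathlib

section
/- Let p ≤ q be integers that are both even. Then the block matrix M_{ρ(p,q)} of the string representation ρ(p,q) is injective and its cokernel has dimension 1 over κ. -/
open Module

/-- A representation of the cyclic quiver `G_{2m}`: `W i` is the odd vertex space `V_{2i+1}`
(0-based, so `W 0 = V_1`), `U i` is the even vertex space `V_{2i+2}`,
`α i : V_{2i+1} → V_{2i+2}` and `β i : V_{2i+3} → V_{2i+2}` (indices of vertices mod `2m`). -/
structure QRep (κ : Type) [Field κ] (m : ℕ) [NeZero m] where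
  W : Fin m → Type
  U : Fin m → Type
  [accW : ∀ i, AddCommGroup (W i)]
  [accU : ∀ i, AddCommGroup (U i)]
  [modW : ∀ i, Module κ (W i)]
  [modU : ∀ i, Module κ (U i)]
  [fdW : ∀ i, FiniteDimensional κ (W i)]
  [fdU : ∀ i, FiniteDimensional κ (U i)]
  α : ∀ i, W i →ₗ[κ] U i
  β : ∀ i, W (i + 1) →ₗ[κ] U i

attribute [instance] QRep.accW QRep.accU QRep.modW QRep.modU QRep.fdW QRep.fdU

namespace QRep

variable {κ : Type} [Field κ] {m : ℕ} [NeZero m]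

/-- The block matrix `M_ρ : ⊕ V_{2i-1} → ⊕ V_{2i}`,
`M_ρ(v₁, v₃, …) = (α₁v₁ − β₁v₃, α₂v₃ − β₂v₅, …, α_m v_{2m−1} − β_m v₁)`. -/
def blockMap (ρ : QRep κ m) : (∀ i, ρ.W i) →ₗ[κ] ∀ i, ρ.U i :=
  LinearMap.pi fun i => (ρ.α i).comp (LinearMap.proj i) - (ρ.β i).comp (LinearMap.proj (i + 1))

/-- Direct sum of two representations. -/
def dsum (ρ σ : QRep κ m) : QRep κ m where
  W i := ρ.W i × σ.W i
  U i := ρ.U i × σ.U i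
  α i := (ρ.α i).prodMap (σ.α i)
  β i := (ρ.β i).prodMap (σ.β i)

/-- Direct sum of a finite family of representations. -/
def dsumFin {N : ℕ} (f : Fin N → QRep κ m) : QRep κ m where
  W i := ∀ j, (f j).W i
  U i := ∀ j, (f j).U i
  α i := LinearMap.pi fun j => ((f j).α i).comp (LinearMap.proj j)
  β i := LinearMap.pi fun j => ((f j).β i).comp (LinearMap.proj j)

/-- An isomorphism of representations. -/
structure Iso (ρ σ : QRep κ m) where
  φW : ∀ i, ρ.W i ≃ₗ[κ] σ.W i
  φU : ∀ i, ρ.U i ≃ₗ[κ] σ.U i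
  commα : ∀ i x, φU i (ρ.α i x) = σ.α i (φW i x)
  commβ : ∀ i x, φU i (ρ.β i x) = σ.β i (φW (i + 1) x)

def IsIsomorphic (ρ σ : QRep κ m) : Prop := Nonempty (Iso ρ σ)

/-- A representation is nontrivial if some vertex space is nonzero. -/
def NontrivialRep (ρ : QRep κ m) : Prop :=
  (∃ i, Nontrivial (ρ.W i)) ∨ (∃ i, Nontrivial (ρ.U i))

/-- A representation is indecomposable if it is nontrivial and not isomorphic to a direct
sum of two nontrivial representations. -/
def Indecomposable (ρ : QRep κ m) : Prop :=
  ρ.NontrivialRep ∧ ∀ σ τ : QRep κ m, σ.NontrivialRep → τ.NontrivialRep →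
    ¬ ρ.IsIsomorphic (σ.dsum τ)

end QRep

namespace QRep

open Fin.NatCast Fin.CommRing

variable {κ : Type} [Field κ] {m : ℕ} [NeZero m]

/-- Transport of an odd vertex space along an equality of indices (linear map version). -/
def castW (ρ : QRep κ m) {a b : Fin m} (h : a = b) : ρ.W a →ₗ[κ] ρ.W b := by
  subst h; exact LinearMap.id

/-- Transport of an odd vertex space along an equality of indices (equiv version). -/
def castWE (ρ : QRep κ m) {a b : Fin m} (h : a = b) : ρ.W a ≃ₗ[κ] ρ.W b := by
  subst h; exact LinearEquiv.refl κ _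

/-- Iterated composite of the maps `g i : W i → W (i+1)`, `n` steps starting at vertex `i`. -/
def cyclicComp (ρ : QRep κ m) (g : ∀ i, ρ.W i →ₗ[κ] ρ.W (i + 1)) :
    (n : ℕ) → ∀ i : Fin m, ρ.W i →ₗ[κ] ρ.W (i + (n : Fin m))
  | 0, i => ρ.castW (by simp)
  | n + 1, i =>
      (ρ.castW (show i + (n : Fin m) + 1 = i + ((n + 1 : ℕ) : Fin m) by push_cast; ring)).comp
        ((g (i + (n : Fin m))).comp (cyclicComp ρ g n i))

/-- The monodromy `T = β_m⁻¹ ∘ α_m ∘ ⋯ ∘ β_1⁻¹ ∘ α_1 : V_1 → V_1`, where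
`g i = β i⁻¹ ∘ α i` is given as data. -/
def monodromy (ρ : QRep κ m) (g : ∀ i, ρ.W i →ₗ[κ] ρ.W (i + 1)) : ρ.W 0 →ₗ[κ] ρ.W 0 :=
  (ρ.castW (show (0 : Fin m) + (m : Fin m) = 0 by simp [Fin.natCast_self])).comp
    (cyclicComp ρ g m 0)

/-- Iterated composite of the equivalences `e i : W i ≃ W (i+1)`, `n` steps starting at `i`. -/
def cyclicCompE (ρ : QRep κ m) (e : ∀ i, ρ.W i ≃ₗ[κ] ρ.W (i + 1)) :
    (n : ℕ) → ∀ i : Fin m, ρ.W i ≃ₗ[κ] ρ.W (i + (n : Fin m))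
  | 0, i => ρ.castWE (by simp)
  | n + 1, i =>
      ((cyclicCompE ρ e n i).trans (e (i + (n : Fin m)))).trans
        (ρ.castWE (show i + (n : Fin m) + 1 = i + ((n + 1 : ℕ) : Fin m) by push_cast; ring))

/-- `T_i`, the monodromy based at the odd vertex `V_{2i+1}` (so `Ti e 0` is `T_m = T`). -/
def Ti (ρ : QRep κ m) (e : ∀ i, ρ.W i ≃ₗ[κ] ρ.W (i + 1)) (i : Fin m) : ρ.W i ≃ₗ[κ] ρ.W i :=
  (cyclicCompE ρ e m i).trans (ρ.castWE (show i + (m : Fin m) = i by simp [Fin.natCast_self]))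

/-- `C_i = g_i ∘ ⋯ ∘ g_1 : V_1 → V_{2i+1}`. -/
def Ci (ρ : QRep κ m) (e : ∀ i, ρ.W i ≃ₗ[κ] ρ.W (i + 1)) (i : Fin m) : ρ.W 0 ≃ₗ[κ] ρ.W i :=
  (cyclicCompE ρ e (i : ℕ) 0).trans
    (ρ.castWE (show (0 : Fin m) + ((i : ℕ) : Fin m) = i by simp [Fin.cast_val_eq_self]))

end QRep

/-- Index set of the basis vectors `e_l`, `p ≤ l ≤ q`, `l ≡ j (mod 2m)`,
of a vertex space of the string representation `ρ(p,q)`. -/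
noncomputable def strIdx (m : ℕ) (p q : ℤ) (j : ZMod (2 * m)) : Finset ℤ :=
  (Finset.Icc p q).filter fun l => ((l : ZMod (2 * m)) = j)

/-- The linear map sending the basis vector `e_l` (`l ∈ T`) to the coordinate `l + d` (if present):
in matrix terms, the map whose `(l', l)` entry is `1` iff `l' + d = l`. -/
def eMap (κ : Type) [Field κ] (S T : Finset ℤ) (d : ℤ) : (S → κ) →ₗ[κ] T → κ where
  toFun f l := if h : ((l : ℤ) + d) ∈ S then f ⟨(l : ℤ) + d, h⟩ else 0
  map_add' f g := by
    funext l
    by_cases h : ((l : ℤ) + d) ∈ S <;> simp [h]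
  map_smul' c f := by
    funext l
    by_cases h : ((l : ℤ) + d) ∈ S <;> simp [h]

/-- The string representation `ρ(p,q)`: the vertex space at vertex `j` has basis
`{e_l : p ≤ l ≤ q, l ≡ j (mod 2m)}`, `α` sends `e_l` to `e_{l+1}` if `l+1 ≤ q` (else `0`),
and `β` sends `e_l` to `e_{l−1}` if `l−1 ≥ p` (else `0`). -/
noncomputable def strRep (κ : Type) [Field κ] (m : ℕ) [NeZero m] (p q : ℤ) : QRep κ m where
  W i := strIdx m p q ((2 * (i : ℕ) + 1 : ℕ)) → κ
  U i := strIdx m p q ((2 * (i : ℕ) + 2 : ℕ)) → κ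
  α _ := eMap κ _ _ (-1)
  β _ := eMap κ _ _ 1

/-- The `k × k` Jordan block `J(λ,k)`: `λ` on the diagonal, `1` on the superdiagonal. -/
def jordanMatrix (κ : Type) [Field κ] (lam : κ) (k : ℕ) : Matrix (Fin k) (Fin k) κ :=
  Matrix.of fun a b => if b = a then lam else if (b : ℕ) = (a : ℕ) + 1 then (1 : κ) else 0

/-- The Jordan-cell representation `ρ^J(λ,k)`: every vertex space is `κ^k`, `α_1 = J(λ,k)`,
and all other maps are the identity. -/
def jordanRep (κ : Type) [Field κ] (m : ℕ) [NeZero m] (lam : κ) (k : ℕ) : QRep κ m where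
  W _ := Fin k → κ
  U _ := Fin k → κ
  α i := if i = 0 then (jordanMatrix κ lam k).mulVecLin else LinearMap.id
  β _ := LinearMap.id


section Helpers

lemma mem_strIdx {m : ℕ} {p q l : ℤ} {j : ℕ} :
    l ∈ strIdx m p q (j : ℕ) ↔ p ≤ l ∧ l ≤ q ∧ (2*m : ℤ) ∣ (l - j) := by
  unfold strIdx
  rw [Finset.mem_filter, Finset.mem_Icc, and_assoc]
  refine and_congr_right fun _ => and_congr_right fun _ => ?_
  rw [show ((j:ℕ) : ZMod (2*m)) = ((j:ℤ) : ZMod (2*m)) by push_cast; ring,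
    ZMod.intCast_eq_intCast_iff, Int.modEq_iff_dvd, dvd_sub_comm]
  push_cast
  rfl

lemma strIdx_disj {m : ℕ} [NeZero m] {p q : ℤ} {c : ℕ} {i j : Fin m} (hij : i ≠ j) :
    Disjoint (strIdx m p q ((2*(i:ℕ)+c : ℕ))) (strIdx m p q ((2*(j:ℕ)+c : ℕ))) := by
  rw [Finset.disjoint_left]
  intro l hi hj
  rw [mem_strIdx] at hi hj
  have hd : (2*m:ℤ) ∣ ((2*(j:ℕ):ℤ) - (2*(i:ℕ):ℤ)) := by
    have := dvd_sub hi.2.2 hj.2.2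
    convert this using 1
    · rfl
    · push_cast; ring
  have h0 := Int.eq_zero_of_abs_lt_dvd hd (by
    have hi' := i.isLt; have hj' := j.isLt
    rw [abs_lt]
    constructor <;> omega)
  exact hij (Fin.ext (by omega))

lemma sum_strIdx_card {m : ℕ} [NeZero m] (p q : ℤ) (c : ℕ) (hc : 1 ≤ c) (hc2 : c ≤ 2) :
    ∑ i : Fin m, (strIdx m p q ((2*(i:ℕ)+c : ℕ))).card
      = ((Finset.Icc p q).filter (fun l => l % 2 = (c : ℤ) % 2)).card := by
  rw [← Finset.card_biUnion (fun i _ j _ hij => strIdx_disj hij)]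
  congr 1
  ext l
  simp only [Finset.mem_filter, Finset.mem_Icc, Finset.mem_biUnion, Finset.mem_univ, true_and,
    mem_strIdx]
  constructor
  · rintro ⟨i, h1, h2, h3⟩
    refine ⟨⟨h1, h2⟩, ?_⟩
    have h2' : (2:ℤ) ∣ l - ((2*(i:ℕ)+c : ℕ) : ℤ) := dvd_trans ⟨(m:ℤ), by ring⟩ h3
    push_cast at h2'
    omega
  · rintro ⟨⟨h1, h2⟩, h3⟩
    have hm : 0 < m := Nat.pos_of_ne_zero (NeZero.ne m)
    set r := l % (2*m) with hrdef
    have hr0 : 0 ≤ r := Int.emod_nonneg l (by positivity)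
    have hrlt : r < 2*m := Int.emod_lt_of_pos l (by positivity)
    have hpar : r % 2 = (c:ℤ) % 2 := by
      rw [hrdef, Int.emod_emod_of_dvd l ⟨(m:ℤ), rfl⟩]; exact h3
    have hdvd : (2*m : ℤ) ∣ l - r := ⟨l / (2*m), by rw [hrdef, Int.emod_def]; ring⟩
    by_cases hrc : r.toNat < c
    · refine ⟨⟨m - 1, by omega⟩, h1, h2, ?_⟩
      have hv : ((2 * (m - 1) + c : ℕ) : ℤ) = r + 2*m := by omega
      rw [hv, show l - (r + 2*m) = (l - r) - 2*m by ring]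
      exact dvd_sub hdvd ⟨1, by ring⟩
    · refine ⟨⟨(r.toNat - c) / 2, by omega⟩, h1, h2, ?_⟩
      have hv : ((2 * ((r.toNat - c) / 2) + c : ℕ) : ℤ) = r := by omega
      rw [hv]; exact hdvd

lemma card_filter_par (p : ℤ) (N : ℕ) (c : ℕ) (hp : p % 2 = 0) (hc : c = 1 ∨ c = 2) :
    ((Finset.Icc p (p+2*(N:ℤ))).filter (fun l => l % 2 = (c:ℤ) % 2)).card
      = if c = 1 then N else N + 1 := by
  have himg : (Finset.Icc p (p+2*(N:ℤ))).filter (fun l => l % 2 = (c:ℤ) % 2)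
      = (Finset.range (if c = 1 then N else N + 1)).image
          (fun k : ℕ => p + 2*(k:ℤ) + (if c = 1 then 1 else 0)) := by
    ext l
    simp only [Finset.mem_filter, Finset.mem_Icc, Finset.mem_image, Finset.mem_range]
    rcases hc with rfl | rfl
    · norm_num
      constructor
      · rintro ⟨⟨h1, h2⟩, h3⟩
        exact ⟨((l - p - 1).toNat/2), by omega, by omega⟩
      · rintro ⟨k, hk, rfl⟩
        omega
    · norm_num
      constructor
      · rintro ⟨⟨h1, h2⟩, h3⟩
        exact ⟨((l - p).toNat/2), by omega, by omega⟩
      · rintro ⟨k, hk, rfl⟩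
        omega
  rw [himg, Finset.card_image_of_injective _ (fun a b h => by omega), Finset.card_range]

end Helpers

/-- For `p ≤ q` both even, the block matrix of the string representation
`ρ(p,q)` is injective and its cokernel is one-dimensional. -/
theorem strRep_blockMap_even_even {κ : Type} [Field κ] {m : ℕ} [NeZero m]
    (p q : ℤ) (hpq : p ≤ q) (hp : Even p) (hq : Even q) :
    Function.Injective (strRep κ m p q).blockMap ∧
    finrank κ ((∀ i, (strRep κ m p q).U i) ⧸ LinearMap.range (strRep κ m p q).blockMap) = 1 := by
  classical
  obtain ⟨N, rfl⟩ : ∃ N : ℕ, q = p + 2*(N:ℤ) := by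
    obtain ⟨a, ha⟩ := hp; obtain ⟨b, hb⟩ := hq
    exact ⟨(b - a).toNat, by omega⟩
  set q := p + 2*(N:ℤ) with hqdef
  have hp2 : p % 2 = 0 := by obtain ⟨a, ha⟩ := hp; omega
  have hq2 : q % 2 = 0 := by rw [hqdef]; omega
  -- kernel is trivial
  have hker : ∀ f, (strRep κ m p q).blockMap f = 0 → f = 0 := by
    intro f hf
    have heq : ∀ (i : Fin m) (y : strIdx m p q ((2*(i:ℕ)+2 : ℕ))),
        (if h : (y:ℤ) + (-1) ∈ strIdx m p q ((2*(i:ℕ)+1 : ℕ)) then f i ⟨(y:ℤ) + (-1), h⟩ else 0)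
          = (if h : (y:ℤ) + 1 ∈ strIdx m p q ((2*((i+1 : Fin m):ℕ)+1 : ℕ)) then
              f (i+1) ⟨(y:ℤ)+1, h⟩ else 0) := by
      intro i y
      have h0 := congrFun (congrFun hf i) y
      simp only [QRep.blockMap, strRep, eMap, LinearMap.pi_apply, LinearMap.sub_apply,
        LinearMap.coe_comp, Function.comp_apply, LinearMap.proj_apply, LinearMap.coe_mk,
        AddHom.coe_mk, Pi.sub_apply] at h0
      exact sub_eq_zero.mp h0
    have step : ∀ (i : Fin m) (x : strIdx m p q ((2*(i:ℕ)+1 : ℕ))),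
        f i x = (if h : ((x:ℤ)+1) + 1 ∈ strIdx m p q ((2*((i+1 : Fin m):ℕ)+1 : ℕ)) then
          f (i+1) ⟨((x:ℤ)+1)+1, h⟩ else 0) := by
      intro i x
      have hx2 := mem_strIdx.mp x.2
      have hodd : (2:ℤ) ∣ (x:ℤ) - ((2*(i:ℕ)+1 : ℕ):ℤ) := dvd_trans ⟨(m:ℤ), by ring⟩ hx2.2.2
      have hy : (x:ℤ)+1 ∈ strIdx m p q ((2*(i:ℕ)+2 : ℕ)) := by
        rw [mem_strIdx]
        have h1 := hx2.1; have h2 := hx2.2.1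
        push_cast at hodd
        refine ⟨by omega, by omega, ?_⟩
        convert hx2.2.2 using 1
        push_cast; ring
      have h := heq i ⟨(x:ℤ)+1, hy⟩
      have hL : (if h' : ((x:ℤ)+1) + (-1) ∈ strIdx m p q ((2*(i:ℕ)+1 : ℕ)) then
          f i ⟨((x:ℤ)+1)+(-1), h'⟩ else 0) = f i x := by
        rw [dif_pos (show ((x:ℤ)+1)+(-1) ∈ strIdx m p q ((2*(i:ℕ)+1 : ℕ)) by
          rw [show ((x:ℤ)+1)+(-1) = (x:ℤ) by ring]; exact x.2)]
        congr 1
        exact Subtype.ext (by push_cast; ring)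
      rw [← hL]
      exact h
    have key : ∀ (k : ℕ) (i : Fin m) (x : strIdx m p q ((2*(i:ℕ)+1 : ℕ))),
        (x:ℤ) = q - 1 - 2*(k:ℤ) → f i x = 0 := by
      intro k
      induction k with
      | zero =>
        intro i x hx
        rw [step i x, dif_neg]
        intro hc
        have := (mem_strIdx.mp hc).2.1
        omega
      | succ k ih =>
        intro i x hx
        rw [step i x]
        by_cases hc : ((x:ℤ)+1) + 1 ∈ strIdx m p q ((2*((i+1 : Fin m):ℕ)+1 : ℕ))
        · rw [dif_pos hc]
          refine ih (i+1) ⟨((x:ℤ)+1)+1, hc⟩ ?_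
          show ((x:ℤ)+1)+1 = q - 1 - 2*(k:ℤ)
          push_cast at hx
          omega
        · rw [dif_neg hc]
    funext i x
    have hx2 := mem_strIdx.mp x.2
    have hodd : (2:ℤ) ∣ (x:ℤ) - ((2*(i:ℕ)+1 : ℕ):ℤ) := dvd_trans ⟨(m:ℤ), by ring⟩ hx2.2.2
    push_cast at hodd
    obtain ⟨k, hk⟩ : ∃ k : ℕ, (x:ℤ) = q - 1 - 2*(k:ℤ) := by
      refine ⟨(q - 1 - (x:ℤ)).toNat/2, ?_⟩
      have h1 := hx2.1; have h2 := hx2.2.1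
      omega
    exact key k i x hk
  have hinj : Function.Injective (strRep κ m p q).blockMap := by
    rw [← LinearMap.ker_eq_bot]
    exact LinearMap.ker_eq_bot'.mpr hker
  have hdW : finrank κ (∀ i, (strRep κ m p q).W i) = N := by
    rw [Module.finrank_pi_fintype κ]
    have hs : ∀ i : Fin m, finrank κ ((strRep κ m p q).W i)
        = (strIdx m p q ((2*(i:ℕ)+1 : ℕ))).card := by
      intro i
      show finrank κ ((strIdx m p q ((2*(i:ℕ)+1 : ℕ)) : Finset ℤ) → κ) = _
      rw [Module.finrank_fintype_fun_eq_card, Fintype.card_coe]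
    rw [Finset.sum_congr rfl fun i _ => hs i,
      sum_strIdx_card p q 1 le_rfl one_le_two,
      card_filter_par p N 1 hp2 (Or.inl rfl), if_pos rfl]
  have hdU : finrank κ (∀ i, (strRep κ m p q).U i) = N + 1 := by
    rw [Module.finrank_pi_fintype κ]
    have hs : ∀ i : Fin m, finrank κ ((strRep κ m p q).U i)
        = (strIdx m p q ((2*(i:ℕ)+2 : ℕ))).card := by
      intro i
      show finrank κ ((strIdx m p q ((2*(i:ℕ)+2 : ℕ)) : Finset ℤ) → κ) = _
      rw [Module.finrank_fintype_fun_eq_card, Fintype.card_coe]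
    rw [Finset.sum_congr rfl fun i _ => hs i,
      sum_strIdx_card p q 2 one_le_two le_rfl,
      card_filter_par p N 2 hp2 (Or.inr rfl), if_neg (by norm_num)]
  refine ⟨hinj, ?_⟩
  have h1 := Submodule.finrank_quotient_add_finrank (LinearMap.range (strRep κ m p q).blockMap)
  rw [LinearMap.finrank_range_of_inj hinj, hdW, hdU] at h1
  omega
end

section
/- Let p ≤ q be integers of which exactly one is even. Then the block matrix M_{ρ(p,q)} of the string representation ρ(p,q) is bijective. -/
open Module

namespace Aux

variable {m : ℕ} [NeZero m]

lemma mem_strIdx {p q l : ℤ} {j : ZMod (2*m)} :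
    l ∈ strIdx m p q j ↔ (p ≤ l ∧ l ≤ q) ∧ (l : ZMod (2*m)) = j := by
  simp [strIdx, Finset.mem_filter, Finset.mem_Icc]

lemma natCast_two_mul_mod (a : ℕ) :
    ((2 * (a % m) : ℕ) : ZMod (2*m)) = ((2 * a : ℕ) : ZMod (2*m)) := by
  have h : (2 * a : ℕ) = 2 * m * (a / m) + 2 * (a % m) := by
    conv_lhs => rw [← Nat.div_add_mod a m]
    ring
  rw [h]; push_cast
  rw [show ((2:ZMod (2*m)) * m) = ((2*m : ℕ) : ZMod (2*m)) by push_cast; ring,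
    ZMod.natCast_self]
  ring

lemma wIdx_succ (i : Fin m) :
    ((2 * (((i+1) : Fin m) : ℕ) + 1 : ℕ) : ZMod (2*m))
      = ((2 * (i : ℕ) + 2 : ℕ) : ZMod (2*m)) + 1 := by
  have hv : (((i+1) : Fin m) : ℕ) = ((i:ℕ) + 1) % m := by
    rw [Fin.val_add, Fin.val_one', Nat.add_mod ((i:ℕ)) 1 m, Nat.mod_eq_of_lt i.isLt]
  rw [hv]
  have h2 := natCast_two_mul_mod (m := m) ((i:ℕ)+1)
  push_cast at h2 ⊢
  linear_combination h2

lemma uIdx_pred (i : Fin m) :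
    ((2 * (((i-1) : Fin m) : ℕ) + 2 : ℕ) : ZMod (2*m))
      = ((2 * (i : ℕ) + 1 : ℕ) : ZMod (2*m)) - 1 := by
  have h := wIdx_succ (m := m) (i - 1)
  rw [sub_add_cancel] at h
  linear_combination -h

lemma odd_of_cast_eq {l : ℤ} {c : ℕ} (hodd : Odd c)
    (h : (l : ZMod (2*m)) = (c : ZMod (2*m))) : Odd l := by
  have h0 : ((l - c : ℤ) : ZMod (2*m)) = 0 := by push_cast [h]; ring
  rw [ZMod.intCast_zmod_eq_zero_iff_dvd] at h0
  obtain ⟨k, hk⟩ := h0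
  obtain ⟨t, ht⟩ := hodd
  refine ⟨(t : ℤ) + m * k, ?_⟩
  have ht' : (c : ℤ) = 2 * t + 1 := by exact_mod_cast ht
  push_cast at hk
  linarith

lemma even_of_cast_eq {l : ℤ} {c : ℕ} (heven : Even c)
    (h : (l : ZMod (2*m)) = (c : ZMod (2*m))) : Even l := by
  have h0 : ((l - c : ℤ) : ZMod (2*m)) = 0 := by push_cast [h]; ring
  rw [ZMod.intCast_zmod_eq_zero_iff_dvd] at h0
  obtain ⟨k, hk⟩ := h0
  obtain ⟨t, ht⟩ := heven
  refine ⟨(t : ℤ) + m * k, ?_⟩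
  have ht' : (c : ℤ) = t + t := by exact_mod_cast ht
  push_cast at hk
  linarith

lemma sum_card_strIdx (p q : ℤ)
    (hparity : (Even p ∧ Odd q) ∨ (Odd p ∧ Even q)) :
    ∑ i : Fin m, (strIdx m p q ((2 * (i : ℕ) + 1 : ℕ))).card
      = ∑ i : Fin m, (strIdx m p q ((2 * (i : ℕ) + 2 : ℕ))).card := by
  rw [← Finset.card_sigma, ← Finset.card_sigma]
  rcases hparity with ⟨hp, hq⟩ | ⟨hp, hq⟩
  · refine Finset.card_bij' (fun a _ => ⟨a.1 - 1, a.2 - 1⟩) (fun a _ => ⟨a.1 + 1, a.2 + 1⟩)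
      ?_ ?_ ?_ ?_
    · rintro ⟨i, l⟩ ha
      simp only [Finset.mem_sigma, Finset.mem_univ, true_and] at ha
      refine Finset.mem_sigma.mpr ⟨Finset.mem_univ _, ?_⟩
      dsimp only
      have hl := mem_strIdx.mp ha
      have hodd : Odd l := odd_of_cast_eq ⟨i, by ring⟩ hl.2
      obtain ⟨a1, ha1⟩ := hodd
      obtain ⟨a2, ha2⟩ := hp
      refine mem_strIdx.mpr ⟨⟨by omega, by omega⟩, ?_⟩
      rw [uIdx_pred, ← hl.2]
      push_cast; ring
    · rintro ⟨i, l⟩ ha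
      simp only [Finset.mem_sigma, Finset.mem_univ, true_and] at ha
      refine Finset.mem_sigma.mpr ⟨Finset.mem_univ _, ?_⟩
      dsimp only
      have hl := mem_strIdx.mp ha
      have heven : Even l := even_of_cast_eq ⟨i + 1, by ring⟩ hl.2
      obtain ⟨a1, ha1⟩ := heven
      obtain ⟨a2, ha2⟩ := hq
      refine mem_strIdx.mpr ⟨⟨by omega, by omega⟩, ?_⟩
      rw [wIdx_succ, ← hl.2]
      push_cast; ring
    · rintro ⟨i, l⟩ _; simp
    · rintro ⟨i, l⟩ _; simp
  · refine Finset.card_bij' (fun a _ => ⟨a.1, a.2 + 1⟩) (fun a _ => ⟨a.1, a.2 - 1⟩)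
      ?_ ?_ ?_ ?_
    · rintro ⟨i, l⟩ ha
      simp only [Finset.mem_sigma, Finset.mem_univ, true_and] at ha
      refine Finset.mem_sigma.mpr ⟨Finset.mem_univ _, ?_⟩
      dsimp only
      have hl := mem_strIdx.mp ha
      have hodd : Odd l := odd_of_cast_eq ⟨i, by ring⟩ hl.2
      obtain ⟨a1, ha1⟩ := hodd
      obtain ⟨a2, ha2⟩ := hq
      refine mem_strIdx.mpr ⟨⟨by omega, by omega⟩, ?_⟩
      have h2 := hl.2
      push_cast at h2 ⊢
      linear_combination h2
    · rintro ⟨i, l⟩ ha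
      simp only [Finset.mem_sigma, Finset.mem_univ, true_and] at ha
      refine Finset.mem_sigma.mpr ⟨Finset.mem_univ _, ?_⟩
      dsimp only
      have hl := mem_strIdx.mp ha
      have heven : Even l := even_of_cast_eq ⟨i + 1, by ring⟩ hl.2
      obtain ⟨a1, ha1⟩ := heven
      obtain ⟨a2, ha2⟩ := hp
      refine mem_strIdx.mpr ⟨⟨by omega, by omega⟩, ?_⟩
      have h2 := hl.2
      push_cast at h2 ⊢
      linear_combination h2
    · rintro ⟨i, l⟩ _; simp
    · rintro ⟨i, l⟩ _; simp

end Aux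

lemma vcastAux {κ : Type} [Field κ] {m : ℕ} [NeZero m] {p q : ℤ}
    (v : ∀ i, (strRep κ m p q).W i) {i j : Fin m} (h : i = j) (x : ℤ)
    (hx : x ∈ strIdx m p q ((2 * (i : ℕ) + 1 : ℕ)))
    (hx' : x ∈ strIdx m p q ((2 * (j : ℕ) + 1 : ℕ))) :
    v i ⟨x, hx⟩ = v j ⟨x, hx'⟩ := by subst h; rfl

open Module in
lemma strRep_blockMap_apply {κ : Type} [Field κ] {m : ℕ} [NeZero m] (p q : ℤ)
    (v : ∀ i, (strRep κ m p q).W i) (i : Fin m)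
    (x : strIdx m p q ((2 * (i : ℕ) + 2 : ℕ))) :
    (strRep κ m p q).blockMap v i x =
      (if h : (x : ℤ) - 1 ∈ strIdx m p q ((2 * (i : ℕ) + 1 : ℕ)) then
          v i ⟨(x : ℤ) - 1, h⟩ else 0)
      - (if h : (x : ℤ) + 1 ∈ strIdx m p q ((2 * (((i+1) : Fin m) : ℕ) + 1 : ℕ)) then
          v (i+1) ⟨(x : ℤ) + 1, h⟩ else 0) := rfl

/-- For `p ≤ q` with exactly one of `p`, `q` even, the block matrix of the
string representation `ρ(p,q)` is bijective. -/
theorem strRep_blockMap_mixed_parity {κ : Type} [Field κ] {m : ℕ} [NeZero m]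
    (p q : ℤ) (hpq : p ≤ q) (hparity : (Even p ∧ Odd q) ∨ (Odd p ∧ Even q)) :
    Function.Bijective (strRep κ m p q).blockMap := by
  have hrank : finrank κ (∀ i, (strRep κ m p q).W i)
      = finrank κ (∀ i, (strRep κ m p q).U i) := by
    show finrank κ (∀ i : Fin m, (strIdx m p q ((2 * (i : ℕ) + 1 : ℕ)) → κ))
       = finrank κ (∀ i : Fin m, (strIdx m p q ((2 * (i : ℕ) + 2 : ℕ)) → κ))
    rw [Module.finrank_pi_fintype, Module.finrank_pi_fintype]
    simp only [Module.finrank_pi, Fintype.card_coe]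
    exact Aux.sum_card_strIdx p q hparity
  have hinj : Function.Injective (strRep κ m p q).blockMap := by
    rw [← LinearMap.ker_eq_bot, LinearMap.ker_eq_bot']
    intro v hv
    rcases hparity with ⟨hp, hq⟩ | ⟨hp, hq⟩
    · have key : ∀ n : ℕ, ∀ (i : Fin m) (x : ℤ)
          (hx : x ∈ strIdx m p q ((2 * (i : ℕ) + 1 : ℕ))),
          (x - p).toNat = n → v i ⟨x, hx⟩ = 0 := by
        intro n
        induction n using Nat.strong_induction_on with
        | _ n ih =>
          intro i x hx hn
          have hx' := Aux.mem_strIdx.mp hx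
          obtain ⟨a1, ha1⟩ := Aux.odd_of_cast_eq (m := m) ⟨(i : ℕ), by ring⟩ hx'.2
          obtain ⟨a2, ha2⟩ := hp
          have h1 := hx'.1.1
          have h2 := hx'.1.2
          have hmem : x - 1 ∈ strIdx m p q ((2 * (((i-1) : Fin m) : ℕ) + 2 : ℕ)) :=
            Aux.mem_strIdx.mpr ⟨⟨by omega, by omega⟩, by
              rw [Aux.uIdx_pred, ← hx'.2]; push_cast; ring⟩
          have heq := congrFun (congrFun hv (i-1)) ⟨x - 1, hmem⟩
          rw [strRep_blockMap_apply] at heq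
          simp only [sub_add_cancel, Pi.zero_apply] at heq
          rw [dif_pos hx] at heq
          by_cases hc : x - 1 - 1 ∈ strIdx m p q ((2 * (((i-1) : Fin m) : ℕ) + 1 : ℕ))
          · have hple := (Aux.mem_strIdx.mp hc).1.1
            have hlt : (x - 1 - 1 - p).toNat < n := by omega
            rw [dif_pos hc, ih _ hlt (i-1) (x-1-1) hc rfl] at heq
            have hb := (sub_eq_zero.mp heq).symm
            exact (vcastAux v (sub_add_cancel i 1).symm x hx _).trans hb
          · rw [dif_neg hc] at heq
            have hb := (sub_eq_zero.mp heq).symm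
            exact (vcastAux v (sub_add_cancel i 1).symm x hx _).trans hb
      funext i x
      simp only [Pi.zero_apply]
      exact key ((x.1 - p).toNat) i x.1 x.2 rfl
    · have key : ∀ n : ℕ, ∀ (i : Fin m) (x : ℤ)
          (hx : x ∈ strIdx m p q ((2 * (i : ℕ) + 1 : ℕ))),
          (q - x).toNat = n → v i ⟨x, hx⟩ = 0 := by
        intro n
        induction n using Nat.strong_induction_on with
        | _ n ih =>
          intro i x hx hn
          have hx' := Aux.mem_strIdx.mp hx
          obtain ⟨a1, ha1⟩ := Aux.odd_of_cast_eq (m := m) ⟨(i : ℕ), by ring⟩ hx'.2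
          obtain ⟨a2, ha2⟩ := hq
          have h1 := hx'.1.1
          have h2 := hx'.1.2
          have hmem : x + 1 ∈ strIdx m p q ((2 * (i : ℕ) + 2 : ℕ)) :=
            Aux.mem_strIdx.mpr ⟨⟨by omega, by omega⟩, by
              have hcast := hx'.2
              push_cast at hcast ⊢
              linear_combination hcast⟩
          have heq := congrFun (congrFun hv i) ⟨x + 1, hmem⟩
          rw [strRep_blockMap_apply] at heq
          simp only [add_sub_cancel_right, Pi.zero_apply] at heq
          rw [dif_pos hx] at heq
          by_cases hc : x + 1 + 1 ∈ strIdx m p q ((2 * (((i+1) : Fin m) : ℕ) + 1 : ℕ))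
          · have hqle := (Aux.mem_strIdx.mp hc).1.2
            have hlt : (q - (x + 1 + 1)).toNat < n := by omega
            rw [dif_pos hc, ih _ hlt (i+1) (x+1+1) hc rfl] at heq
            exact sub_eq_zero.mp heq
          · rw [dif_neg hc] at heq
            exact sub_eq_zero.mp heq
      funext i x
      simp only [Pi.zero_apply]
      exact key ((q - x.1).toNat) i x.1 x.2 rfl
  exact ⟨hinj, (LinearMap.injective_iff_surjective_of_finrank_eq_finrank hrank).mp hinj⟩
end

section
/- For every λ ∈ κ with λ ≠ 0 and every integer k ≥ 1, the representation ρ^J(λ,k) of the cyclic quiver G_{2m} is indecomposable. -/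
open Module

section JordanAux
variable {κ : Type} [Field κ]

lemma jordan_mulVec (lam : κ) {k : ℕ} (v : Fin k → κ) (a : Fin k) :
    (jordanMatrix κ lam k).mulVecLin v a
      = lam * v a + (if h : (a:ℕ)+1 < k then v ⟨(a:ℕ)+1, h⟩ else 0) := by
  have key : ∀ b : Fin k,
      jordanMatrix κ lam k a b * v b
        = (if b = a then lam * v a else 0) + (if ((b:ℕ) = (a:ℕ)+1) then v b else 0) := by
    intro b
    by_cases h1 : b = a
    · subst h1; simp [jordanMatrix]
    · by_cases h2 : (b:ℕ) = (a:ℕ)+1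
      · simp [jordanMatrix, h1, h2]
      · simp [jordanMatrix, h1, h2]
  rw [Matrix.mulVecLin_apply]
  simp only [Matrix.mulVec, dotProduct]
  rw [Finset.sum_congr rfl fun b _ => key b, Finset.sum_add_distrib,
    Finset.sum_ite_eq' Finset.univ a (fun _ => lam * v a)]
  simp only [Finset.mem_univ, if_true]
  congr 1
  by_cases h : (a:ℕ)+1 < k
  · rw [dif_pos h]
    rw [Finset.sum_eq_single (⟨(a:ℕ)+1, h⟩ : Fin k)]
    · simp
    · intro b _ hb
      rw [if_neg]
      simpa [Fin.ext_iff] using hb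
    · intro hmem; exact absurd (Finset.mem_univ _) hmem
  · rw [dif_neg h]
    apply Finset.sum_eq_zero
    intro b _
    rw [if_neg]
    omega

noncomputable def shiftN (κ : Type) [Field κ] (lam : κ) (k : ℕ) :
    (Fin k → κ) →ₗ[κ] Fin k → κ :=
  (jordanMatrix κ lam k).mulVecLin - lam • LinearMap.id

lemma shiftN_apply (lam : κ) {k : ℕ} (v : Fin k → κ) (a : Fin k) :
    shiftN κ lam k v a = if h : (a:ℕ)+1 < k then v ⟨(a:ℕ)+1, h⟩ else 0 := by
  rw [shiftN, LinearMap.sub_apply, Pi.sub_apply, jordan_mulVec]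
  simp

lemma shiftN_pow_apply (lam : κ) {k : ℕ} (j : ℕ) (v : Fin k → κ) (a : Fin k) :
    ((shiftN κ lam k)^j) v a = if h : (a:ℕ)+j < k then v ⟨(a:ℕ)+j, h⟩ else 0 := by
  induction j generalizing v a with
  | zero => simp
  | succ n ih =>
    rw [pow_succ, Module.End.mul_apply, ih]
    by_cases h : (a:ℕ)+n < k
    · rw [dif_pos h, shiftN_apply]
      by_cases h2 : (a:ℕ)+n+1 < k
      · rw [dif_pos h2, dif_pos (show (a:ℕ)+(n+1) < k by omega)]
        congr 1
      · rw [dif_neg h2, dif_neg (show ¬((a:ℕ)+(n+1) < k) by omega)]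
    · rw [dif_neg h, dif_neg (show ¬((a:ℕ)+(n+1) < k) by omega)]

lemma jordan_core_contradiction (lam : κ) {k : ℕ} (hk : 1 ≤ k)
    (A : (Fin k → κ) →ₗ[κ] Fin k → κ)
    (hcomm : ∀ v, A ((jordanMatrix κ lam k).mulVecLin v) = (jordanMatrix κ lam k).mulVecLin (A v))
    (z z' : Fin k → κ) (hz : z ≠ 0) (hAz : A z = z) (hz' : z' ≠ 0) (hAz' : A z' = 0) :
    False := by
  classical
  set N := shiftN κ lam k with hN
  have hAN : ∀ v, A (N v) = N (A v) := by
    intro v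
    simp only [hN, shiftN, LinearMap.sub_apply, LinearMap.smul_apply, LinearMap.id_apply,
      map_sub, map_smul, hcomm]
  have hANpow : ∀ j v, A ((N^j) v) = (N^j) (A v) := by
    intro j
    induction j with
    | zero => simp
    | succ n ih => intro v; rw [pow_succ, Module.End.mul_apply, Module.End.mul_apply, ih, hAN]
  have hNk : ∀ v : Fin k → κ, (N^k) v = 0 := by
    intro v; funext a
    rw [hN, shiftN_pow_apply, dif_neg (by omega)]
    rfl
  have hker : ∀ v : Fin k → κ, N v = 0 → ∀ a : Fin k, (a:ℕ) ≠ 0 → v a = 0 := by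
    intro v hv a ha
    have h1 : ((⟨(a:ℕ)-1, by omega⟩ : Fin k):ℕ)+1 < k := by simp; omega
    have := congrFun hv (⟨(a:ℕ)-1, by omega⟩ : Fin k)
    rw [hN, shiftN_apply, dif_pos h1, Pi.zero_apply] at this
    convert this using 2
    simp [Fin.ext_iff]; omega
  have extract : ∀ w : Fin k → κ, w ≠ 0 → ∃ u : Fin k → κ, u ≠ 0 ∧ N u = 0 ∧
      ∃ j : ℕ, u = (N^j) w := by
    intro w hw
    have hex : ∃ j, (N^j) w = 0 := ⟨k, hNk w⟩
    set j := Nat.find hex with hj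
    have hjne : j ≠ 0 := by
      intro h
      have := Nat.find_spec hex
      rw [← hj, h] at this
      simp at this
      exact hw this
    refine ⟨(N^(j-1)) w, ?_, ?_, j-1, rfl⟩
    · exact Nat.find_min hex (by omega)
    · have hspec : (N^j) w = 0 := Nat.find_spec hex
      calc N ((N^(j-1)) w) = (N^(j-1+1)) w := by rw [pow_succ', Module.End.mul_apply]
      _ = 0 := by rw [show j-1+1 = j by omega]; exact hspec
  obtain ⟨u, hu, hNu, j, hju⟩ := extract z hz
  obtain ⟨u', hu', hNu', j', hju'⟩ := extract z' hz'
  have hAu : A u = u := by rw [hju, hANpow, hAz]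
  have hAu' : A u' = 0 := by rw [hju', hANpow, hAz']; simp
  set c0 : Fin k := ⟨0, hk⟩ with hc0
  have hsupp : ∀ (v : Fin k → κ), N v = 0 → v ≠ 0 → v c0 ≠ 0 := by
    intro v hv hvne hvc0
    apply hvne
    funext a
    by_cases ha : (a:ℕ) = 0
    · have : a = c0 := by simp [Fin.ext_iff, hc0, ha]
      rw [this, hvc0]; rfl
    · exact hker v hv a ha
  have huc : u c0 ≠ 0 := hsupp u hNu hu
  have huc' : u' c0 ≠ 0 := hsupp u' hNu' hu'
  have hcomb : (u' c0) • u = (u c0) • u' := by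
    funext a
    by_cases ha : (a:ℕ) = 0
    · have : a = c0 := by simp [Fin.ext_iff, hc0, ha]
      subst this
      simp [mul_comm]
    · simp [hker u hNu a ha, hker u' hNu' a ha]
  have hAA := congrArg A hcomb
  rw [map_smul, map_smul, hAu, hAu'] at hAA
  rw [hAA] at hcomb
  have := congrFun hcomb c0
  simp at this
  rcases this with h | h
  · exact huc h
  · exact huc' h

end JordanAux

open Fin.NatCast Fin.CommRing

/-- For every `λ ≠ 0` and every `k ≥ 1`, the Jordan-cell representation
`ρ^J(λ,k)` of the cyclic quiver `G_{2m}` is indecomposable. -/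
theorem jordanRep_indecomposable {κ : Type} [Field κ] {m : ℕ} [NeZero m]
    (lam : κ) (hlam : lam ≠ 0) (k : ℕ) (hk : 1 ≤ k) :
    (jordanRep κ m lam k).Indecomposable := by
  classical
  constructor
  · left
    refine ⟨0, ⟨(fun _ => 0 : Fin k → κ), (fun _ => 1 : Fin k → κ), fun h => ?_⟩⟩
    have := congrFun h ⟨0, hk⟩
    simp at this
  · rintro σ τ hσ hτ ⟨F⟩
    let J : (Fin k → κ) →ₗ[κ] Fin k → κ := (jordanMatrix κ lam k).mulVecLin
    let P : ∀ i : Fin m, (σ.W i × τ.W i) →ₗ[κ] σ.W i × τ.W i := fun i =>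
      (LinearMap.id : σ.W i →ₗ[κ] σ.W i).prodMap (0 : τ.W i →ₗ[κ] τ.W i)
    let Q : ∀ i : Fin m, (σ.U i × τ.U i) →ₗ[κ] σ.U i × τ.U i := fun i =>
      (LinearMap.id : σ.U i →ₗ[κ] σ.U i).prodMap (0 : τ.U i →ₗ[κ] τ.U i)
    let AW : ∀ _ : Fin m, (Fin k → κ) →ₗ[κ] Fin k → κ := fun i =>
      ((F.φW i).symm.toLinearMap.comp ((P i).comp (F.φW i).toLinearMap) :
        (jordanRep κ m lam k).W i →ₗ[κ] (jordanRep κ m lam k).W i)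
    let AU : ∀ _ : Fin m, (Fin k → κ) →ₗ[κ] Fin k → κ := fun i =>
      ((F.φU i).symm.toLinearMap.comp ((Q i).comp (F.φU i).toLinearMap) :
        (jordanRep κ m lam k).U i →ₗ[κ] (jordanRep κ m lam k).U i)
    have hβ : ∀ (i : Fin m) (x : Fin k → κ),
        F.φU i x = (σ.dsum τ).β i (F.φW (i+1) x) := fun i x => F.commβ i x
    have hαne : ∀ (i : Fin m), i ≠ 0 → ∀ x : Fin k → κ,
        F.φU i x = (σ.dsum τ).α i (F.φW i x) := by
      intro i hi x
      have h := F.commα i x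
      rwa [show (jordanRep κ m lam k).α i = LinearMap.id from if_neg hi] at h
    have hα0 : ∀ x : Fin k → κ,
        F.φU 0 (J x) = (σ.dsum τ).α 0 (F.φW 0 x) := by
      intro x
      have h := F.commα 0 x
      rwa [show (jordanRep κ m lam k).α 0 = J from rfl] at h
    have hQβP : ∀ (i : Fin m) (z : (σ.dsum τ).W (i+1)),
        Q i ((σ.dsum τ).β i z) = (σ.dsum τ).β i (P (i+1) z) := by
      intro i z
      show (LinearMap.id.prodMap 0) ((σ.β i).prodMap (τ.β i) z)
        = (σ.β i).prodMap (τ.β i) ((LinearMap.id.prodMap 0) z)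
      obtain ⟨z1, z2⟩ := z
      simp
    have hQαP : ∀ (i : Fin m) (z : (σ.dsum τ).W i),
        Q i ((σ.dsum τ).α i z) = (σ.dsum τ).α i (P i z) := by
      intro i z
      show (LinearMap.id.prodMap 0) ((σ.α i).prodMap (τ.α i) z)
        = (σ.α i).prodMap (τ.α i) ((LinearMap.id.prodMap 0) z)
      obtain ⟨z1, z2⟩ := z
      simp
    have hAWP : ∀ (i : Fin m) (x : Fin k → κ),
        F.φW i (AW i x) = P i (F.φW i x) :=
      fun i x => LinearEquiv.apply_symm_apply (F.φW i) _
    have h1 : ∀ (i : Fin m) (x : Fin k → κ), AU i x = AW (i+1) x := by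
      intro i x
      show (F.φU i).symm (Q i (F.φU i x)) = AW (i+1) x
      rw [hβ i x, hQβP, ← hAWP (i+1) x, ← hβ i (AW (i+1) x)]
      exact LinearEquiv.symm_apply_apply _ _
    have h2 : ∀ (i : Fin m), i ≠ 0 → ∀ x : Fin k → κ, AU i x = AW i x := by
      intro i hi x
      show (F.φU i).symm (Q i (F.φU i x)) = AW i x
      rw [hαne i hi x, hQαP, ← hAWP i x, ← hαne i hi (AW i x)]
      exact LinearEquiv.symm_apply_apply _ _
    have h3 : ∀ x : Fin k → κ, AU 0 (J x) = J (AW 0 x) := by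
      intro x
      show (F.φU 0).symm (Q 0 (F.φU 0 (J x))) = J (AW 0 x)
      rw [hα0 x, hQαP, ← hAWP 0 x, ← hα0 (AW 0 x)]
      exact LinearEquiv.symm_apply_apply _ _
    have hstep : ∀ (i : Fin m), i ≠ 0 → ∀ x, AW (i+1) x = AW i x := by
      intro i hi x
      rw [← h1 i x, h2 i hi x]
    have hchain : ∀ d n : ℕ, n + d = m → 1 ≤ n → ∀ x, AW ((n : ℕ) : Fin m) x = AW 0 x := by
      intro d
      induction d with
      | zero =>
        intro n hn _ x
        have : n = m := by omega
        subst this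
        rw [Fin.natCast_self]
      | succ d ih =>
        intro n hn h1n x
        have hlt : n < m := by omega
        have hne : ((n : ℕ) : Fin m) ≠ 0 := by
          intro h
          apply_fun Fin.val at h
          rw [Fin.val_cast_of_lt hlt] at h
          simp at h
          omega
        have hs := hstep _ hne x
        rw [show ((n : ℕ) : Fin m) + 1 = (((n+1 : ℕ)) : Fin m) by push_cast; ring] at hs
        rw [← hs]
        exact ih (n+1) (by omega) (by omega) x
    have hall : ∀ (i : Fin m) (x : Fin k → κ), AW i x = AW 0 x := by
      intro i x
      by_cases hi : i = 0
      · rw [hi]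
      · have hv : (i : ℕ) < m := i.isLt
        have h1i : 1 ≤ (i : ℕ) := by
          rcases Nat.eq_zero_or_pos (i : ℕ) with h | h
          · exact absurd (Fin.ext h) hi
          · exact h
        have := hchain (m - (i : ℕ)) (i : ℕ) (by omega) h1i x
        rwa [Fin.cast_val_eq_self] at this
    have hallU : ∀ (i : Fin m) (x : Fin k → κ), AU i x = AW 0 x := by
      intro i x
      rw [h1 i x, hall]
    have hcommA : ∀ x, AW 0 (J x) = J (AW 0 x) := by
      intro x
      rw [← hallU 0 (J x), h3]
    -- produce z with AW 0 z = z, z ≠ 0, from nontriviality of σ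
    have hzex : ∃ z : Fin k → κ, z ≠ 0 ∧ AW 0 z = z := by
      rcases hσ with ⟨i0, hnt⟩ | ⟨i0, hnt⟩
      · obtain ⟨a, b, hab⟩ := hnt
        refine ⟨(F.φW i0).symm (a - b, 0), ?_, ?_⟩
        · intro h
          apply hab
          have h2 : ((a - b, 0) : σ.W i0 × τ.W i0) = 0 := by
            have := congrArg (F.φW i0) h
            exact ((F.φW i0).apply_symm_apply _).symm.trans (this.trans (map_zero _))
          have := congrArg Prod.fst h2
          simpa [sub_eq_zero] using this
        · erw [← hall i0]
          show (F.φW i0).symm (P i0 (F.φW i0 ((F.φW i0).symm (a - b, 0)))) = _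
          erw [LinearEquiv.apply_symm_apply]
          congr 1
      · obtain ⟨a, b, hab⟩ := hnt
        refine ⟨(F.φU i0).symm (a - b, 0), ?_, ?_⟩
        · intro h
          apply hab
          have h2 : ((a - b, 0) : σ.U i0 × τ.U i0) = 0 := by
            have := congrArg (F.φU i0) h
            exact ((F.φU i0).apply_symm_apply _).symm.trans (this.trans (map_zero _))
          have := congrArg Prod.fst h2
          simpa [sub_eq_zero] using this
        · erw [← hallU i0]
          show (F.φU i0).symm (Q i0 (F.φU i0 ((F.φU i0).symm (a - b, 0)))) = _
          erw [LinearEquiv.apply_symm_apply]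
          congr 1
    have hz'ex : ∃ z' : Fin k → κ, z' ≠ 0 ∧ AW 0 z' = 0 := by
      rcases hτ with ⟨i0, hnt⟩ | ⟨i0, hnt⟩
      · obtain ⟨a, b, hab⟩ := hnt
        refine ⟨(F.φW i0).symm (0, a - b), ?_, ?_⟩
        · intro h
          apply hab
          have h2 : ((0, a - b) : σ.W i0 × τ.W i0) = 0 := by
            have := congrArg (F.φW i0) h
            exact ((F.φW i0).apply_symm_apply _).symm.trans (this.trans (map_zero _))
          have := congrArg Prod.snd h2
          simpa [sub_eq_zero] using this
        · erw [← hall i0]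
          show (F.φW i0).symm (P i0 (F.φW i0 ((F.φW i0).symm (0, a - b)))) = _
          erw [LinearEquiv.apply_symm_apply]
          have : P i0 ((0, a - b) : σ.W i0 × τ.W i0) = 0 := by
            show (LinearMap.id.prodMap 0) ((0, a - b) : σ.W i0 × τ.W i0) = 0
            simp [Prod.ext_iff]
          rw [this]; exact map_zero _
      · obtain ⟨a, b, hab⟩ := hnt
        refine ⟨(F.φU i0).symm (0, a - b), ?_, ?_⟩
        · intro h
          apply hab
          have h2 : ((0, a - b) : σ.U i0 × τ.U i0) = 0 := by
            have := congrArg (F.φU i0) h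
            exact ((F.φU i0).apply_symm_apply _).symm.trans (this.trans (map_zero _))
          have := congrArg Prod.snd h2
          simpa [sub_eq_zero] using this
        · erw [← hallU i0]
          show (F.φU i0).symm (Q i0 (F.φU i0 ((F.φU i0).symm (0, a - b)))) = _
          erw [LinearEquiv.apply_symm_apply]
          have : Q i0 ((0, a - b) : σ.U i0 × τ.U i0) = 0 := by
            show (LinearMap.id.prodMap 0) ((0, a - b) : σ.U i0 × τ.U i0) = 0
            simp [Prod.ext_iff]
          rw [this]; exact map_zero _
    obtain ⟨z, hz, hAz⟩ := hzex
    obtain ⟨z', hz', hAz'⟩ := hz'ex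
    exact jordan_core_contradiction lam hk (AW 0) hcommA z z' hz hAz hz' hAz'
end

section
/- Let ρ be a representation of the cyclic quiver G_{2m} and let k ≥ 0. If ρ admits no l′-chain for any 1 ≤ l′ ≤ k, then every collection of successive elements of length k+1 satisfying P1, P2 and P3 also satisfies P4; hence it is a (k+1)-chain. -/
open Module

/-- A representation of the cyclic quiver `G_{2m}`, with the vertex data extended
`2m`-periodically over the integers. All vertex spaces are realized as submodules of a common
ambient vector space `E`; the map `α_i : V_{2i−1} → V_{2i}` (resp. `β_i : V_{2i+1} → V_{2i}`)
is recorded as the restriction to `V (2i−1)` (resp. `V (2i+1)`) of an ambient linear map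
`A i` (resp. `B i`). -/
structure ZRep (κ : Type) [Field κ] (m : ℕ) (E : Type) [AddCommGroup E] [Module κ E] where
  V : ℤ → Submodule κ E
  A : ℤ → E →ₗ[κ] E
  B : ℤ → E →ₗ[κ] E
  Vper : ∀ j : ℤ, V (j + 2 * (m : ℤ)) = V j
  Aper : ∀ (i : ℤ) (x : E), x ∈ V (2 * i - 1) → A (i + (m : ℤ)) x = A i x
  Bper : ∀ (i : ℤ) (x : E), x ∈ V (2 * i + 1) → B (i + (m : ℤ)) x = B i x
  Amap : ∀ (i : ℤ) (x : E), x ∈ V (2 * i - 1) → A i x ∈ V (2 * i)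
  Bmap : ∀ (i : ℤ) (x : E), x ∈ V (2 * i + 1) → B i x ∈ V (2 * i)

namespace ZRep

variable {κ : Type} [Field κ] {m : ℕ} {E : Type} [AddCommGroup E] [Module κ E]

/-- A collection of successive elements of length `l`, starting at the integer index `p`,
satisfying properties P1, P2 and P3: `h i ∈ V i` and `h i ≠ 0` for `p ≤ i ≤ p+l−1`;
(P1) `α_i (h (2i−1)) = h (2i)` and `β_i (h (2i+1)) = h (2i)` whenever the indices involved lie
in `[p, p+l−1]`; (P2) if `p = 2i` then `h p ∉ α_i (V (2i−1))`, and if `p = 2i+1` then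
`β_i (h p) = 0`; (P3) if `p+l−1 = 2i` then `h (p+l−1) ∉ β_i (V (2i+1))`, and if
`p+l−1 = 2i−1` then `α_i (h (p+l−1)) = 0`. -/
def IsPreChain (ρ : ZRep κ m E) (p : ℤ) (l : ℕ) (h : ℤ → E) : Prop :=
  1 ≤ l ∧
  (∀ j : ℤ, p ≤ j → j ≤ p + l - 1 → h j ∈ ρ.V j ∧ h j ≠ 0) ∧
  (∀ i : ℤ, p ≤ 2 * i - 1 → 2 * i ≤ p + l - 1 → ρ.A i (h (2 * i - 1)) = h (2 * i)) ∧
  (∀ i : ℤ, p ≤ 2 * i → 2 * i + 1 ≤ p + l - 1 → ρ.B i (h (2 * i + 1)) = h (2 * i)) ∧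
  (∀ i : ℤ, p = 2 * i → h p ∉ ⇑(ρ.A i) '' (ρ.V (2 * i - 1) : Set E)) ∧
  (∀ i : ℤ, p = 2 * i + 1 → ρ.B i (h p) = 0) ∧
  (∀ i : ℤ, p + l - 1 = 2 * i → h (p + l - 1) ∉ ⇑(ρ.B i) '' (ρ.V (2 * i + 1) : Set E)) ∧
  (∀ i : ℤ, p + l - 1 = 2 * i - 1 → ρ.A i (h (p + l - 1)) = 0)

/-- An `l`-chain: a collection of successive elements of length `l` satisfying P1, P2, P3 and,
in addition, (P4) for each vertex `j` the elements of the collection lying in `V j`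
(i.e. those `h i` with `i ≡ j (mod 2m)`) are linearly independent. -/
def IsLChain (ρ : ZRep κ m E) (p : ℤ) (l : ℕ) (h : ℤ → E) : Prop :=
  IsPreChain ρ p l h ∧
  ∀ j : ℤ, LinearIndependent κ
    (fun i : {i : ℤ // p ≤ i ∧ i ≤ p + l - 1 ∧ (2 * (m : ℤ)) ∣ (i - j)} => h i)

/-- `V^c j`: the span of the elements of the chain `h` lying in the vertex space `V j`. -/
def chainSpan (ρ : ZRep κ m E) (p : ℤ) (l : ℕ) (h : ℤ → E) (j : ℤ) : Submodule κ E :=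
  Submodule.span κ {x | ∃ i : ℤ, p ≤ i ∧ i ≤ p + l - 1 ∧ (2 * (m : ℤ)) ∣ (i - j) ∧ x = h i}

lemma Vshift (ρ : ZRep κ m E) (j e : ℤ) : ρ.V (j + 2 * (m : ℤ) * e) = ρ.V j := by
  induction e using Int.induction_on with
  | zero => simp
  | succ n ih =>
      have := ρ.Vper (j + 2 * (m : ℤ) * n)
      rw [show j + 2*(m:ℤ)*(n+1) = j + 2*(m:ℤ)*n + 2*(m:ℤ) by ring, this, ih]
  | pred n ih =>
      have := ρ.Vper (j + 2 * (m : ℤ) * (-n - 1))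
      rw [show j + 2*(m:ℤ)*(-n-1) + 2*(m:ℤ) = j + 2*(m:ℤ)*(-n) by ring] at this
      rw [← this, ih]

lemma Vdvd (ρ : ZRep κ m E) (j d : ℤ) (hd : 2 * (m : ℤ) ∣ d) : ρ.V (j + d) = ρ.V j := by
  obtain ⟨e, rfl⟩ := hd; exact ρ.Vshift j e

lemma Ashift (ρ : ZRep κ m E) (i e : ℤ) (x : E) (hx : x ∈ ρ.V (2 * i - 1)) :
    ρ.A (i + (m : ℤ) * e) x = ρ.A i x := by
  induction e using Int.induction_on with
  | zero => simp
  | succ n ih =>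
      have hx' : x ∈ ρ.V (2 * (i + (m:ℤ)*n) - 1) := by
        rw [show (2 * (i + (m:ℤ)*n) - 1) = (2*i-1) + 2*(m:ℤ)*n by ring, ρ.Vshift]; exact hx
      have := ρ.Aper (i + (m:ℤ)*n) x hx'
      rw [show i + (m:ℤ)*((n:ℤ)+1) = i + (m:ℤ)*n + (m:ℤ) by ring, this, ih]
  | pred n ih =>
      have hx' : x ∈ ρ.V (2 * (i + (m:ℤ)*(-n-1)) - 1) := by
        rw [show (2 * (i + (m:ℤ)*(-(n:ℤ)-1)) - 1) = (2*i-1) + 2*(m:ℤ)*(-(n:ℤ)-1) by ring, ρ.Vshift]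
        exact hx
      have h2 := ρ.Aper (i + (m:ℤ)*(-n-1)) x hx'
      rw [show i + (m:ℤ)*(-(n:ℤ)-1) + (m:ℤ) = i + (m:ℤ)*(-(n:ℤ)) by ring] at h2
      rw [← h2]; exact ih

lemma Bshift (ρ : ZRep κ m E) (i e : ℤ) (x : E) (hx : x ∈ ρ.V (2 * i + 1)) :
    ρ.B (i + (m : ℤ) * e) x = ρ.B i x := by
  induction e using Int.induction_on with
  | zero => simp
  | succ n ih =>
      have hx' : x ∈ ρ.V (2 * (i + (m:ℤ)*n) + 1) := by
        rw [show (2 * (i + (m:ℤ)*n) + 1) = (2*i+1) + 2*(m:ℤ)*n by ring, ρ.Vshift]; exact hx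
      have := ρ.Bper (i + (m:ℤ)*n) x hx'
      rw [show i + (m:ℤ)*((n:ℤ)+1) = i + (m:ℤ)*n + (m:ℤ) by ring, this, ih]
  | pred n ih =>
      have hx' : x ∈ ρ.V (2 * (i + (m:ℤ)*(-n-1)) + 1) := by
        rw [show (2 * (i + (m:ℤ)*(-(n:ℤ)-1)) + 1) = (2*i+1) + 2*(m:ℤ)*(-(n:ℤ)-1) by ring, ρ.Vshift]
        exact hx
      have h2 := ρ.Bper (i + (m:ℤ)*(-n-1)) x hx'
      rw [show i + (m:ℤ)*(-(n:ℤ)-1) + (m:ℤ) = i + (m:ℤ)*(-(n:ℤ)) by ring] at h2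
      rw [← h2]; exact ih

lemma isPreChain_Icc (ρ : ZRep κ m E) (u v : ℤ) (g : ℤ → E) (huv : u ≤ v)
    (h1 : ∀ i, u ≤ i → i ≤ v → g i ∈ ρ.V i ∧ g i ≠ 0)
    (h2 : ∀ i : ℤ, u ≤ 2*i - 1 → 2*i ≤ v → ρ.A i (g (2*i-1)) = g (2*i))
    (h3 : ∀ i : ℤ, u ≤ 2*i → 2*i+1 ≤ v → ρ.B i (g (2*i+1)) = g (2*i))
    (h4 : ∀ i : ℤ, u = 2*i → g u ∉ ⇑(ρ.A i) '' (ρ.V (2*i-1) : Set E))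
    (h5 : ∀ i : ℤ, u = 2*i+1 → ρ.B i (g u) = 0)
    (h6 : ∀ i : ℤ, v = 2*i → g v ∉ ⇑(ρ.B i) '' (ρ.V (2*i+1) : Set E))
    (h7 : ∀ i : ℤ, v = 2*i-1 → ρ.A i (g v) = 0) :
    ρ.IsPreChain u ((v - u + 1).toNat) g := by
  have hv : u + ((v - u + 1).toNat : ℤ) - 1 = v := by omega
  refine ⟨by omega, ?_, ?_, ?_, h4, h5, ?_, ?_⟩
  · intro i hi1 hi2; exact h1 i hi1 (by omega)
  · intro i hi1 hi2; exact h2 i hi1 (by omega)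
  · intro i hi1 hi2; exact h3 i hi1 (by omega)
  · simp only [hv]; exact h6
  · simp only [hv]; exact h7

end ZRep

/-- If a representation of `G_{2m}` admits no `l′`-chain for any
`1 ≤ l′ ≤ k`, then every collection of successive elements of length `k+1` satisfying
P1, P2 and P3 also satisfies P4, i.e. it is a `(k+1)`-chain. -/
theorem preChain_isChain_of_no_shorter_chain {κ : Type} [Field κ] {m : ℕ} [NeZero m]
    {E : Type} [AddCommGroup E] [Module κ E]
    (ρ : ZRep κ m E) (hfd : ∀ j : ℤ, FiniteDimensional κ (ρ.V j)) (k : ℕ)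
    (hno : ∀ l', 1 ≤ l' → l' ≤ k → ∀ (p : ℤ) (c : ℤ → E), ¬ ρ.IsLChain p l' c) :
    ∀ (p : ℤ) (c : ℤ → E), ρ.IsPreChain p (k + 1) c → ρ.IsLChain p (k + 1) c := by
  classical
  revert hno
  induction k using Nat.strong_induction_on with
  | _ k IH =>
  intro hno p c hpre
  have hm : 1 ≤ (m : ℤ) := by exact_mod_cast Nat.one_le_iff_ne_zero.mpr (NeZero.ne m)
  set K : ℤ := p + (k : ℤ) with hKdef
  have hcast : p + ((k + 1 : ℕ) : ℤ) - 1 = K := by push_cast; omega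
  refine ⟨hpre, ?_⟩
  obtain ⟨-, hmem, hA, hB, hP2e, hP2o, hP3e, hP3o⟩ := hpre
  simp only [hcast] at hmem hA hB hP3e hP3o
  -- the "finishing move": any strictly shorter pre-chain gives a contradiction
  have hfin : ∀ (u v : ℤ) (g : ℤ → E), u ≤ v → v - u + 1 ≤ (k : ℤ) →
      (∀ i, u ≤ i → i ≤ v → g i ∈ ρ.V i ∧ g i ≠ 0) →
      (∀ i : ℤ, u ≤ 2*i - 1 → 2*i ≤ v → ρ.A i (g (2*i-1)) = g (2*i)) →
      (∀ i : ℤ, u ≤ 2*i → 2*i+1 ≤ v → ρ.B i (g (2*i+1)) = g (2*i)) →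
      (∀ i : ℤ, u = 2*i → g u ∉ ⇑(ρ.A i) '' (ρ.V (2*i-1) : Set E)) →
      (∀ i : ℤ, u = 2*i+1 → ρ.B i (g u) = 0) →
      (∀ i : ℤ, v = 2*i → g v ∉ ⇑(ρ.B i) '' (ρ.V (2*i+1) : Set E)) →
      (∀ i : ℤ, v = 2*i-1 → ρ.A i (g v) = 0) → False := by
    intro u v g huv hlen h1 h2 h3 h4 h5 h6 h7
    have hpre' : ρ.IsPreChain u ((v - u + 1).toNat) g :=
      ρ.isPreChain_Icc u v g huv h1 h2 h3 h4 h5 h6 h7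
    have hl1 : 1 ≤ (v - u + 1).toNat := by omega
    have hlk : (v - u + 1).toNat ≤ k := by omega
    have hch := IH ((v - u + 1).toNat - 1) (by omega)
      (fun l'' h1'' h2'' => hno l'' h1'' (by omega)) u g
      (by rwa [Nat.sub_add_cancel hl1])
    rw [Nat.sub_add_cancel hl1] at hch
    exact hno _ hl1 hlk u g hch
  intro j
  by_contra hLI
  rw [not_linearIndependent_iff] at hLI
  obtain ⟨sfin, fco, hsum0, i0s, hi0mem, hi0ne⟩ := hLI
  -- existence of a nontrivial relation; pick one of minimal width
  have hPex : ∃ w : ℕ, ∃ S : Finset ℤ, ∃ co : ℤ → κ, ∃ hne : S.Nonempty,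
      ((∀ t ∈ S, p ≤ t ∧ t ≤ K ∧ co t ≠ 0) ∧
       (∀ t1 ∈ S, ∀ t2 ∈ S, (2*(m:ℤ)) ∣ (t1 - t2)) ∧
       (∑ t ∈ S, co t • c t = 0)) ∧ (S.max' hne - S.min' hne).toNat = w := by
    refine ⟨_, (sfin.filter fun i => fco i ≠ 0).image Subtype.val,
      (fun t => if ht : p ≤ t ∧ t ≤ p + ((k + 1 : ℕ) : ℤ) - 1 ∧ (2*(m:ℤ)) ∣ (t - j)
        then fco ⟨t, ht⟩ else 0),
      ⟨(i0s : ℤ), ?_⟩, ⟨?_, ?_, ?_⟩, rfl⟩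
    · simp only [Finset.mem_image, Finset.mem_filter]
      exact ⟨i0s, ⟨hi0mem, hi0ne⟩, rfl⟩
    · intro t ht
      simp only [Finset.mem_image, Finset.mem_filter] at ht
      obtain ⟨i, ⟨his, hfi⟩, rfl⟩ := ht
      refine ⟨i.2.1, by have := i.2.2.1; omega, ?_⟩
      simp only [ne_eq]
      rw [dif_pos i.2, Subtype.coe_eta]
      exact hfi
    · intro t1 h1 t2 h2
      simp only [Finset.mem_image, Finset.mem_filter] at h1 h2
      obtain ⟨i1, -, rfl⟩ := h1
      obtain ⟨i2, -, rfl⟩ := h2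
      obtain ⟨e1, he1⟩ := i1.2.2.2
      obtain ⟨e2, he2⟩ := i2.2.2.2
      exact ⟨e1 - e2, by rw [show (i1:ℤ) - i2 = ((i1:ℤ) - j) - ((i2:ℤ) - j) by ring, he1, he2]; ring⟩
    · calc ∑ t ∈ (sfin.filter fun i => fco i ≠ 0).image Subtype.val,
            (fun t => if ht : p ≤ t ∧ t ≤ p + ((k + 1 : ℕ) : ℤ) - 1 ∧ (2*(m:ℤ)) ∣ (t - j)
              then fco ⟨t, ht⟩ else 0) t • c t
          = ∑ i ∈ sfin.filter fun i => fco i ≠ 0, fco i • c ↑i := by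
            rw [Finset.sum_image (by intro x hx y hy h; exact Subtype.ext h)]
            refine Finset.sum_congr rfl ?_
            intro x hx
            simp only
            rw [dif_pos x.2, Subtype.coe_eta]
        _ = ∑ i ∈ sfin, fco i • c ↑i :=
            Finset.sum_filter_of_ne (fun x hx h => fun h0 => h (by rw [h0, zero_smul]))
        _ = 0 := hsum0
  obtain ⟨S, co, hne, ⟨hSmem, hScong, hSsum⟩, hwidth⟩ := Nat.find_spec hPex
  set q := S.min' hne with hqdef
  set r := S.max' hne with hrdef
  have hqS : q ∈ S := S.min'_mem hne
  have hrS : r ∈ S := S.max'_mem hne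
  have hpq : p ≤ q := (hSmem q hqS).1
  have hrK : r ≤ K := (hSmem r hrS).2.1
  have hqler : ∀ t ∈ S, q ≤ t ∧ t ≤ r := fun t ht => ⟨S.min'_le t ht, S.le_max' t ht⟩
  have hcard : 1 < S.card := by
    by_contra hcd
    have hc1 : S.card = 1 := by
      have := Finset.card_pos.mpr hne; omega
    obtain ⟨t0, ht0⟩ := Finset.card_eq_one.mp hc1
    have ht0S : t0 ∈ S := by rw [ht0]; exact Finset.mem_singleton_self t0
    have := hSsum
    rw [ht0, Finset.sum_singleton] at this
    rcases smul_eq_zero.mp this with h | h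
    · exact (hSmem t0 ht0S).2.2 h
    · exact (hmem t0 (hSmem t0 ht0S).1 (hSmem t0 ht0S).2.1).2 h
  have hqr : q < r := S.min'_lt_max'_of_card hcard
  have hdvd_rq : (2*(m:ℤ)) ∣ (r - q) := hScong r hrS q hqS
  have h2m_rq : 2*(m:ℤ) ≤ r - q := Int.le_of_dvd (by omega) hdvd_rq
  have ht_gap : ∀ t ∈ S, t ≠ q → q + 2*(m:ℤ) ≤ t := by
    intro t ht htq
    have h1 := (hqler t ht).1
    have h2 : 2*(m:ℤ) ≤ t - q := Int.le_of_dvd (by omega) (hScong t ht q hqS)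
    omega
  have ht_gapr : ∀ t ∈ S, t ≠ r → t + 2*(m:ℤ) ≤ r := by
    intro t ht htr
    have h1 := (hqler t ht).2
    have h2 : 2*(m:ℤ) ≤ r - t := Int.le_of_dvd (by omega) (hScong r hrS t ht)
    omega
  -- the zero-extension of c, and the shifted combination g
  set hext : ℤ → E := fun i => if p ≤ i ∧ i ≤ K then c i else 0 with hextdef
  have hextEq : ∀ i : ℤ, p ≤ i → i ≤ K → hext i = c i := by
    intro i h1 h2; rw [hextdef]; exact if_pos ⟨h1, h2⟩
  have hext0 : ∀ i : ℤ, (i < p ∨ K < i) → hext i = 0 := by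
    intro i h1; rw [hextdef]; exact if_neg (by omega)
  have hextV : ∀ i : ℤ, hext i ∈ ρ.V i := by
    intro i
    by_cases h1 : p ≤ i ∧ i ≤ K
    · rw [hextEq i h1.1 h1.2]; exact (hmem i h1.1 h1.2).1
    · rw [hext0 i (by omega)]; exact Submodule.zero_mem _
  have hextA : ∀ i : ℤ, 2*i ≠ p → ρ.A i (hext (2*i - 1)) = hext (2*i) := by
    intro i hip
    by_cases h1 : p ≤ 2*i - 1 ∧ 2*i ≤ K
    · rw [hextEq _ h1.1 (by omega), hextEq _ (by omega) h1.2]; exact hA i h1.1 h1.2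
    · by_cases h2 : 2*i - 1 < p
      · rw [hext0 _ (by omega), map_zero, hext0 _ (by omega)]
      · have hK2i : K < 2*i := by omega
        by_cases h3 : 2*i - 1 ≤ K
        · have hKeq : K = 2*i - 1 := by omega
          rw [hextEq _ (by omega) (by omega), hext0 _ (by omega)]
          have := hP3o i hKeq
          rwa [hKeq] at this
        · rw [hext0 _ (by omega), map_zero, hext0 _ (by omega)]
  have hextB : ∀ i : ℤ, 2*i ≠ K → ρ.B i (hext (2*i + 1)) = hext (2*i) := by
    intro i hiK
    by_cases h1 : p ≤ 2*i ∧ 2*i + 1 ≤ K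
    · rw [hextEq _ (by omega) (by omega), hextEq _ h1.1 (by omega)]; exact hB i h1.1 h1.2
    · by_cases h2 : K < 2*i + 1
      · rw [hext0 _ (by omega), map_zero, hext0 _ (by omega)]
      · have hp2i : 2*i < p := by omega
        by_cases h3 : p ≤ 2*i + 1
        · have hpeq : p = 2*i + 1 := by omega
          rw [hextEq _ (by omega) (by omega), hext0 _ (by omega)]
          have := hP2o i hpeq
          rwa [hpeq] at this
        · rw [hext0 _ (by omega), map_zero, hext0 _ (by omega)]
  set g : ℤ → E := fun i => ∑ t ∈ S, co t • hext (i + (t - q)) with hgdef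
  have hgi : ∀ i : ℤ, g i = ∑ t ∈ S, co t • hext (i + (t - q)) := fun i => by rw [hgdef]
  have hgV : ∀ i : ℤ, g i ∈ ρ.V i := by
    intro i
    rw [hgi]
    refine Submodule.sum_mem _ ?_
    intro t ht
    refine Submodule.smul_mem _ _ ?_
    have := hextV (i + (t - q))
    rwa [ρ.Vdvd i (t - q) (hScong t ht q hqS)] at this
  have hg0 : g q = 0 := by
    rw [hgi, Finset.sum_congr rfl (fun t ht => ?_), hSsum]
    rw [show q + (t - q) = t by ring, hextEq t (hSmem t ht).1 (hSmem t ht).2.1]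
  have gA : ∀ i : ℤ, (∀ t ∈ S, 2*i + (t - q) ≠ p) → ρ.A i (g (2*i - 1)) = g (2*i) := by
    intro i hside
    rw [hgi, hgi, map_sum]
    refine Finset.sum_congr rfl ?_
    intro t ht
    rw [map_smul]
    congr 1
    obtain ⟨e, he⟩ := hScong t ht q hqS
    have he1 : 2*i - 1 + (t - q) = 2*(i + (m:ℤ)*e) - 1 := by rw [he]; ring
    have he2 : 2*i + (t - q) = 2*(i + (m:ℤ)*e) := by rw [he]; ring
    have hxmem : hext (2*i - 1 + (t - q)) ∈ ρ.V (2*i - 1) := by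
      have := hextV (2*i - 1 + (t - q))
      rwa [ρ.Vdvd (2*i - 1) (t - q) ⟨e, he⟩] at this
    calc ρ.A i (hext (2*i - 1 + (t - q)))
        = ρ.A (i + (m:ℤ)*e) (hext (2*i - 1 + (t - q))) := (ρ.Ashift i e _ hxmem).symm
      _ = hext (2*i + (t - q)) := by
          rw [he1, hextA (i + (m:ℤ)*e) (by rw [← he2]; exact hside t ht), ← he2]
  have gB : ∀ i : ℤ, (∀ t ∈ S, 2*i + (t - q) ≠ K) → ρ.B i (g (2*i + 1)) = g (2*i) := by
    intro i hside
    rw [hgi, hgi, map_sum]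
    refine Finset.sum_congr rfl ?_
    intro t ht
    rw [map_smul]
    congr 1
    obtain ⟨e, he⟩ := hScong t ht q hqS
    have he1 : 2*i + 1 + (t - q) = 2*(i + (m:ℤ)*e) + 1 := by rw [he]; ring
    have he2 : 2*i + (t - q) = 2*(i + (m:ℤ)*e) := by rw [he]; ring
    have hxmem : hext (2*i + 1 + (t - q)) ∈ ρ.V (2*i + 1) := by
      have := hextV (2*i + 1 + (t - q))
      rwa [ρ.Vdvd (2*i + 1) (t - q) ⟨e, he⟩] at this
    calc ρ.B i (hext (2*i + 1 + (t - q)))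
        = ρ.B (i + (m:ℤ)*e) (hext (2*i + 1 + (t - q))) := (ρ.Bshift i e _ hxmem).symm
      _ = hext (2*i + (t - q)) := by
          rw [he1, hextB (i + (m:ℤ)*e) (by rw [← he2]; exact hside t ht), ← he2]
  have gzL : ∀ i : ℤ, i < p - (r - q) → g i = 0 := by
    intro i hi
    rw [hgi]
    refine Finset.sum_eq_zero ?_
    intro t ht
    rw [hext0 _ (Or.inl (by have := (hqler t ht).2; omega)), smul_zero]
  have gzR : ∀ i : ℤ, K < i → g i = 0 := by
    intro i hi
    rw [hgi]
    refine Finset.sum_eq_zero ?_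
    intro t ht
    rw [hext0 _ (Or.inr (by have := (hqler t ht).1; omega)), smul_zero]
  rcases Int.even_or_odd p with ⟨ip, hip⟩ | ⟨ip, hip⟩
  · -- Case 1 : p is even
    have hp2 : p = 2 * ip := by omega
    set s' : ℤ := K - (r - q) with hs'
    have hqs' : q ≤ s' := by omega
    set Zs := (Finset.Icc p s').filter (fun i => g i = 0) with hZsdef
    have hZne : Zs.Nonempty := by
      refine ⟨q, ?_⟩
      rw [hZsdef, Finset.mem_filter, Finset.mem_Icc]
      exact ⟨⟨hpq, hqs'⟩, hg0⟩
    set z := Zs.min' hZne with hzdef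
    have hzmem : z ∈ Zs := Zs.min'_mem hZne
    rw [hZsdef, Finset.mem_filter, Finset.mem_Icc] at hzmem
    obtain ⟨⟨hpz, hzs⟩, hgz⟩ := hzmem
    have hzmin : ∀ i, p ≤ i → i ≤ s' → g i = 0 → z ≤ i := by
      intro i h1 h2 h3
      refine Zs.min'_le i ?_
      rw [hZsdef, Finset.mem_filter, Finset.mem_Icc]
      exact ⟨⟨h1, h2⟩, h3⟩
    -- decomposition of g p
    have hdec : ∃ y ∈ ρ.V (2*ip - 1), g p = co q • c p + ρ.A ip y := by
      have hsum_mem : ∑ t ∈ S.erase q, co t • hext (p + (t - q)) ∈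
          Submodule.map (ρ.A ip) (ρ.V (2*ip - 1)) := by
        refine Submodule.sum_mem _ ?_
        intro t ht
        rw [Finset.mem_erase] at ht
        obtain ⟨htq, htS⟩ := ht
        obtain ⟨e, he⟩ := hScong t htS q hqS
        have hgap := ht_gap t htS htq
        have hle := (hqler t htS).2
        have heq : p + (t - q) = 2*(ip + (m:ℤ)*e) := by rw [hp2, he]; ring
        have hc1 : p ≤ 2*(ip + (m:ℤ)*e) - 1 := by linarith
        have hc2 : 2*(ip + (m:ℤ)*e) ≤ K := by linarith
        have hPA := hA (ip + (m:ℤ)*e) hc1 hc2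
        have hcmem : c (2*(ip + (m:ℤ)*e) - 1) ∈ ρ.V (2*ip - 1) := by
          have h1 := (hmem (2*(ip + (m:ℤ)*e) - 1) (by linarith) (by linarith)).1
          have hVeq : ρ.V (2*(ip + (m:ℤ)*e) - 1) = ρ.V (2*ip - 1) := by
            rw [show (2*(ip + (m:ℤ)*e) - 1) = (2*ip - 1) + 2*(m:ℤ)*e by ring, ρ.Vshift]
          rwa [hVeq] at h1
        have hAsh := ρ.Ashift ip e _ hcmem
        have hhext : hext (p + (t - q)) = ρ.A ip (c (2*(ip + (m:ℤ)*e) - 1)) := by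
          rw [heq, hextEq _ (by linarith) hc2, ← hPA, hAsh]
        rw [hhext]
        exact Submodule.smul_mem _ _ (Submodule.mem_map_of_mem hcmem)
      obtain ⟨y, hy, hyeq⟩ := Submodule.mem_map.mp hsum_mem
      refine ⟨y, hy, ?_⟩
      rw [hgi, ← Finset.add_sum_erase S _ hqS, show p + (q - q) = p by ring,
        hextEq p le_rfl (by omega), hyeq]
    obtain ⟨y, hy, hdecomp⟩ := hdec
    have hcoq : co q ≠ 0 := (hSmem q hqS).2.2
    have hnotin : g p ∉ ⇑(ρ.A ip) '' (ρ.V (2*ip - 1) : Set E) := by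
      rintro ⟨x, hx, hxe⟩
      refine hP2e ip hp2 ?_
      refine ⟨(co q)⁻¹ • (x - y), ?_, ?_⟩
      · exact Submodule.smul_mem _ _ (Submodule.sub_mem _ hx hy)
      · rw [map_smul, map_sub, hxe, hdecomp, add_sub_cancel_right, smul_smul,
          inv_mul_cancel₀ hcoq, one_smul]
    have hgp_ne : g p ≠ 0 := by
      intro h0
      exact hnotin (by rw [h0]; exact ⟨0, Submodule.zero_mem _, map_zero _⟩)
    have hpz' : p < z := by
      rcases lt_or_eq_of_le hpz with h | h
      · exact h
      · exact absurd (by rw [h]; exact hgz) hgp_ne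
    have hzeven : ∃ tz, z = 2*tz := by
      rcases Int.even_or_odd z with ⟨t, htz⟩ | ⟨t, htz⟩
      · exact ⟨t, by omega⟩
      · exfalso
        have hb : ρ.B t (g (2*t + 1)) = g (2*t) := by
          refine gB t ?_
          intro t' ht'
          have := (hqler t' ht').2
          omega
        have hz0 : g (2*t) = 0 := by
          rw [← hb, show 2*t + 1 = z by omega, hgz, map_zero]
        have := hzmin (2*t) (by omega) (by omega) hz0
        omega
    obtain ⟨tz, htz⟩ := hzeven
    refine hfin p (z - 1) g (by omega) (by omega) ?_ ?_ ?_ ?_ ?_ ?_ ?_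
    · intro i h1 h2
      refine ⟨hgV i, fun h0 => ?_⟩
      have := hzmin i h1 (by omega) h0
      omega
    · intro i h1 h2
      refine gA i ?_
      intro t ht
      have := (hqler t ht).1
      omega
    · intro i h1 h2
      refine gB i ?_
      intro t ht
      have := (hqler t ht).2
      omega
    · intro i hi
      have : i = ip := by omega
      subst this
      exact hnotin
    · intro i hi
      exfalso; omega
    · intro i hi
      exfalso; omega
    · intro i hi
      have h2iz : 2*i = z := by omega
      have hAi : ρ.A i (g (2*i - 1)) = g (2*i) := by
        refine gA i ?_
        intro t ht
        have := (hqler t ht).1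
        omega
      rw [show z - 1 = 2*i - 1 by omega, hAi, h2iz, hgz]
  · -- p is odd
    have hpodd : p = 2*ip + 1 := by omega
    rcases Int.even_or_odd K with ⟨iK, hiK⟩ | ⟨iK, hiK⟩
    · -- Case 2 : K is even
      have hK2 : K = 2 * iK := by omega
      obtain ⟨er, her⟩ := hdvd_rq
      set s' : ℤ := K - (r - q) with hs'
      set is' : ℤ := iK - (m:ℤ)*er with his'
      have hs2 : s' = 2*is' := by rw [hs', his', hK2, her]; ring
      have hqs' : q ≤ s' := by omega
      set Zs := (Finset.Icc p s').filter (fun i => g i = 0) with hZsdef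
      have hZne : Zs.Nonempty := by
        refine ⟨q, ?_⟩
        rw [hZsdef, Finset.mem_filter, Finset.mem_Icc]
        exact ⟨⟨hpq, hqs'⟩, hg0⟩
      set z := Zs.max' hZne with hzdef
      have hzmem : z ∈ Zs := Zs.max'_mem hZne
      rw [hZsdef, Finset.mem_filter, Finset.mem_Icc] at hzmem
      obtain ⟨⟨hpz, hzs⟩, hgz⟩ := hzmem
      have hzmax : ∀ i, p ≤ i → i ≤ s' → g i = 0 → i ≤ z := by
        intro i h1 h2 h3
        refine Zs.le_max' i ?_
        rw [hZsdef, Finset.mem_filter, Finset.mem_Icc]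
        exact ⟨⟨h1, h2⟩, h3⟩
      have hdec : ∃ y ∈ ρ.V (2*is' + 1), g s' = co r • c K + ρ.B is' y := by
        have hsum_mem : ∑ t ∈ S.erase r, co t • hext (s' + (t - q)) ∈
            Submodule.map (ρ.B is') (ρ.V (2*is' + 1)) := by
          refine Submodule.sum_mem _ ?_
          intro t ht
          rw [Finset.mem_erase] at ht
          obtain ⟨htr, htS⟩ := ht
          obtain ⟨e, he⟩ := hScong t htS q hqS
          have hgap := ht_gapr t htS htr
          have hge := (hqler t htS).1
          have heq : s' + (t - q) = 2*(is' + (m:ℤ)*e) := by rw [hs', his', hK2, her, he]; ring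
          have hc1 : p ≤ 2*(is' + (m:ℤ)*e) := by linarith
          have hc2 : 2*(is' + (m:ℤ)*e) + 1 ≤ K := by linarith
          have hPB := hB (is' + (m:ℤ)*e) hc1 hc2
          have hcmem : c (2*(is' + (m:ℤ)*e) + 1) ∈ ρ.V (2*is' + 1) := by
            have h1 := (hmem (2*(is' + (m:ℤ)*e) + 1) (by linarith) (by linarith)).1
            have hVeq : ρ.V (2*(is' + (m:ℤ)*e) + 1) = ρ.V (2*is' + 1) := by
              rw [show (2*(is' + (m:ℤ)*e) + 1) = (2*is' + 1) + 2*(m:ℤ)*e by ring, ρ.Vshift]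
            rwa [hVeq] at h1
          have hBsh := ρ.Bshift is' e _ hcmem
          have hhext : hext (s' + (t - q)) = ρ.B is' (c (2*(is' + (m:ℤ)*e) + 1)) := by
            rw [heq, hextEq _ (by linarith) (by linarith), ← hPB, hBsh]
          rw [hhext]
          exact Submodule.smul_mem _ _ (Submodule.mem_map_of_mem hcmem)
        obtain ⟨y, hy, hyeq⟩ := Submodule.mem_map.mp hsum_mem
        refine ⟨y, hy, ?_⟩
        rw [hgi, ← Finset.add_sum_erase S _ hrS, show s' + (r - q) = K by omega,
          hextEq K (by omega) le_rfl, hyeq]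
      obtain ⟨y, hy, hdecomp⟩ := hdec
      have hcor : co r ≠ 0 := (hSmem r hrS).2.2
      have his'K : is' + (m:ℤ)*er = iK := by rw [his']; ring
      have hnotin : g s' ∉ ⇑(ρ.B is') '' (ρ.V (2*is' + 1) : Set E) := by
        rintro ⟨x, hx, hxe⟩
        refine hP3e iK hK2 ?_
        have harg : (co r)⁻¹ • (x - y) ∈ ρ.V (2*is' + 1) :=
          Submodule.smul_mem _ _ (Submodule.sub_mem _ hx hy)
        have hVeq : ρ.V (2*iK + 1) = ρ.V (2*is' + 1) := by
          rw [show 2*iK + 1 = (2*is' + 1) + 2*(m:ℤ)*er by rw [his']; ring, ρ.Vshift]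
        refine ⟨(co r)⁻¹ • (x - y), ?_, ?_⟩
        · show (co r)⁻¹ • (x - y) ∈ ρ.V (2*iK + 1)
          rw [hVeq]; exact harg
        · have hBsh := ρ.Bshift is' er _ harg
          rw [his'K] at hBsh
          rw [hBsh, map_smul, map_sub, hxe, hdecomp, add_sub_cancel_right, smul_smul,
            inv_mul_cancel₀ hcor, one_smul]
      have hgs_ne : g s' ≠ 0 := by
        intro h0
        exact hnotin (by rw [h0]; exact ⟨0, Submodule.zero_mem _, map_zero _⟩)
      have hzs' : z < s' := by
        rcases lt_or_eq_of_le hzs with h | h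
        · exact h
        · exact absurd (by rw [← h]; exact hgz) hgs_ne
      have hzeven : ∃ tz, z = 2*tz := by
        rcases Int.even_or_odd z with ⟨t, htz⟩ | ⟨t, htz⟩
        · exact ⟨t, by omega⟩
        · exfalso
          have ha : ρ.A (t+1) (g (2*(t+1) - 1)) = g (2*(t+1)) := by
            refine gA (t+1) ?_
            intro t' ht'
            have := (hqler t' ht').1
            omega
          have hz0 : g (2*(t+1)) = 0 := by
            rw [← ha, show 2*(t+1) - 1 = z by omega, hgz, map_zero]
          have := hzmax (2*(t+1)) (by omega) (by omega) hz0
          omega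
      obtain ⟨tz, htz⟩ := hzeven
      refine hfin (z+1) s' g (by omega) (by omega) ?_ ?_ ?_ ?_ ?_ ?_ ?_
      · intro i h1 h2
        refine ⟨hgV i, fun h0 => ?_⟩
        have := hzmax i (by omega) h2 h0
        omega
      · intro i h1 h2
        refine gA i ?_
        intro t ht
        have := (hqler t ht).1
        omega
      · intro i h1 h2
        refine gB i ?_
        intro t ht
        have := (hqler t ht).2
        omega
      · intro i hi
        exfalso; omega
      · intro i hi
        have hBz : ρ.B i (g (2*i + 1)) = g (2*i) := by
          refine gB i ?_
          intro t ht
          have := (hqler t ht).2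
          omega
        rw [show z + 1 = 2*i + 1 by omega, hBz, show 2*i = z by omega, hgz]
      · intro i hi
        obtain rfl : i = is' := by omega
        exact hnotin
      · intro i hi
        exfalso; omega
    · -- Case 3 : p and K both odd
      have hKodd : K = 2*iK + 1 := hiK
      have h2dvd : ∀ t ∈ S, ∃ D : ℤ, t - q = 2*D := by
        intro t ht
        obtain ⟨e, he⟩ := hScong t ht q hqS
        exact ⟨(m:ℤ)*e, by rw [he]; ring⟩
      have gAall : ∀ i : ℤ, ρ.A i (g (2*i - 1)) = g (2*i) := by
        intro i
        refine gA i ?_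
        intro t ht
        obtain ⟨D, hD⟩ := h2dvd t ht
        omega
      have gBall : ∀ i : ℤ, ρ.B i (g (2*i + 1)) = g (2*i) := by
        intro i
        refine gB i ?_
        intro t ht
        obtain ⟨D, hD⟩ := h2dvd t ht
        omega
      have hgex : ∃ i0x : ℤ, g i0x ≠ 0 := by
        by_contra hall
        push_neg at hall
        set δ : ℤ := p - 1 - q with hδ
        set S' := (S.erase q).image (fun t => t + δ) with hS'def
        set co' : ℤ → κ := fun t => co (t - δ) with hco'def
        have hmemS' : ∀ t' ∈ S', ∃ t, t ∈ S ∧ t ≠ q ∧ t' = t + δ := by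
          intro t' ht'
          rw [hS'def] at ht'
          simp only [Finset.mem_image, Finset.mem_erase] at ht'
          obtain ⟨t, ⟨htq, htS⟩, rfl⟩ := ht'
          exact ⟨t, htS, htq, rfl⟩
        have hS'ne : S'.Nonempty := by
          refine ⟨r + δ, ?_⟩
          rw [hS'def]
          simp only [Finset.mem_image, Finset.mem_erase]
          exact ⟨r, ⟨by omega, hrS⟩, rfl⟩
        have hsum' : ∑ t ∈ S', co' t • c t = 0 := by
          rw [hS'def, Finset.sum_image (by intro x hx y hy h; exact add_right_cancel h)]
          have h1 : ∀ t ∈ S.erase q, co' (t + δ) • c (t + δ) = co t • hext (p - 1 + (t - q)) := by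
            intro t ht
            rw [Finset.mem_erase] at ht
            have hgap := ht_gap t ht.2 ht.1
            have hle := (hqler t ht.2).2
            rw [hco'def]
            simp only
            rw [show t + δ - δ = t by ring, show t + δ = p - 1 + (t - q) by omega,
              hextEq _ (by omega) (by omega)]
          rw [Finset.sum_congr rfl h1]
          have h2 : g (p-1) = ∑ t ∈ S.erase q, co t • hext (p - 1 + (t - q)) := by
            rw [hgi, ← Finset.add_sum_erase S _ hqS, show p - 1 + (q - q) = p - 1 by ring,
              hext0 (p-1) (by omega), smul_zero, zero_add]
          rw [← h2, hall (p-1)]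
        have hrelpkg : ((∀ t ∈ S', p ≤ t ∧ t ≤ K ∧ co' t ≠ 0) ∧
            (∀ t1 ∈ S', ∀ t2 ∈ S', (2*(m:ℤ)) ∣ (t1 - t2)) ∧
            (∑ t ∈ S', co' t • c t = 0)) := by
          refine ⟨?_, ?_, hsum'⟩
          · intro t' ht'
            obtain ⟨t, htS, htq, rfl⟩ := hmemS' t' ht'
            have h1 := ht_gap t htS htq
            have h2 := (hqler t htS).2
            refine ⟨by omega, by omega, ?_⟩
            rw [hco'def]
            simp only
            rw [show t + δ - δ = t by ring]
            exact (hSmem t htS).2.2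
          · intro t1 h1 t2 h2
            obtain ⟨u1, hu1, -, rfl⟩ := hmemS' t1 h1
            obtain ⟨u2, hu2, -, rfl⟩ := hmemS' t2 h2
            have := hScong u1 hu1 u2 hu2
            rwa [show u1 + δ - (u2 + δ) = u1 - u2 by ring]
        have hle' : Nat.find hPex ≤ (S'.max' hS'ne - S'.min' hS'ne).toNat :=
          Nat.find_min' hPex ⟨S', co', hS'ne, hrelpkg, rfl⟩
        have hmax' : S'.max' hS'ne ≤ r + δ := by
          refine Finset.max'_le _ _ _ ?_
          intro t' ht'
          obtain ⟨t, htS, htq, rfl⟩ := hmemS' t' ht'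
          have := (hqler t htS).2
          omega
        have hmin' : q + 2*(m:ℤ) + δ ≤ S'.min' hS'ne := by
          refine Finset.le_min' _ _ _ ?_
          intro t' ht'
          obtain ⟨t, htS, htq, rfl⟩ := hmemS' t' ht'
          have := ht_gap t htS htq
          omega
        omega
      obtain ⟨i0x, hi0x⟩ := hgex
      have hi0q : i0x ≠ q := fun h => hi0x (by rw [h]; exact hg0)
      have hi0range : p - (r - q) ≤ i0x ∧ i0x ≤ K := by
        constructor
        · by_contra h; exact hi0x (gzL i0x (by omega))
        · by_contra h; exact hi0x (gzR i0x (by omega))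
      set Z2 := (Finset.Icc i0x (K+1)).filter (fun i => g i = 0) with hZ2def
      have hZ2ne : Z2.Nonempty := by
        refine ⟨K+1, ?_⟩
        rw [hZ2def, Finset.mem_filter, Finset.mem_Icc]
        exact ⟨⟨by omega, le_refl _⟩, gzR (K+1) (by omega)⟩
      set z2 := Z2.min' hZ2ne with hz2def
      have hz2mem : z2 ∈ Z2 := Z2.min'_mem hZ2ne
      rw [hZ2def, Finset.mem_filter, Finset.mem_Icc] at hz2mem
      obtain ⟨⟨hz2l, hz2r⟩, hgz2⟩ := hz2mem
      have hz2min : ∀ i, i0x ≤ i → i ≤ K+1 → g i = 0 → z2 ≤ i := by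
        intro i h1 h2 h3
        refine Z2.min'_le i ?_
        rw [hZ2def, Finset.mem_filter, Finset.mem_Icc]
        exact ⟨⟨h1, h2⟩, h3⟩
      have hz2gt : i0x < z2 := by
        rcases lt_or_eq_of_le hz2l with h | h
        · exact h
        · exact absurd (by rw [h]; exact hgz2) hi0x
      have hz2even : ∃ t2, z2 = 2*t2 := by
        rcases Int.even_or_odd z2 with ⟨t, ht⟩ | ⟨t, ht⟩
        · exact ⟨t, by omega⟩
        · exfalso
          have hz0 : g (2*t) = 0 := by
            rw [← gBall t, show 2*t + 1 = z2 by omega, hgz2, map_zero]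
          have := hz2min (2*t) (by omega) (by omega) hz0
          omega
      set Z1 := (Finset.Icc (p - (r - q) - 1) i0x).filter (fun i => g i = 0) with hZ1def
      have hZ1ne : Z1.Nonempty := by
        refine ⟨p - (r - q) - 1, ?_⟩
        rw [hZ1def, Finset.mem_filter, Finset.mem_Icc]
        exact ⟨⟨le_refl _, by omega⟩, gzL _ (by omega)⟩
      set z1 := Z1.max' hZ1ne with hz1def
      have hz1mem : z1 ∈ Z1 := Z1.max'_mem hZ1ne
      rw [hZ1def, Finset.mem_filter, Finset.mem_Icc] at hz1mem
      obtain ⟨⟨hz1l, hz1r⟩, hgz1⟩ := hz1mem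
      have hz1max : ∀ i, p - (r - q) - 1 ≤ i → i ≤ i0x → g i = 0 → i ≤ z1 := by
        intro i h1 h2 h3
        refine Z1.le_max' i ?_
        rw [hZ1def, Finset.mem_filter, Finset.mem_Icc]
        exact ⟨⟨h1, h2⟩, h3⟩
      have hz1lt : z1 < i0x := by
        rcases lt_or_eq_of_le hz1r with h | h
        · exact h
        · exact absurd (by rw [← h]; exact hgz1) hi0x
      have hz1even : ∃ t1, z1 = 2*t1 := by
        rcases Int.even_or_odd z1 with ⟨t, ht⟩ | ⟨t, ht⟩
        · exact ⟨t, by omega⟩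
        · exfalso
          have hz0 : g (2*(t+1)) = 0 := by
            rw [← gAall (t+1), show 2*(t+1) - 1 = z1 by omega, hgz1, map_zero]
          have := hz1max (2*(t+1)) (by omega) (by omega) hz0
          omega
      obtain ⟨t2, ht2⟩ := hz2even
      obtain ⟨t1, ht1⟩ := hz1even
      have hlen : (z2 - 1) - (z1 + 1) + 1 ≤ (k:ℤ) := by
        rcases lt_or_gt_of_ne hi0q with hlt | hgt
        · have := hz2min q (by omega) (by omega) hg0
          omega
        · have := hz1max q (by omega) (by omega) hg0
          omega
      refine hfin (z1+1) (z2-1) g (by omega) hlen ?_ ?_ ?_ ?_ ?_ ?_ ?_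
      · intro i h1 h2
        refine ⟨hgV i, fun h0 => ?_⟩
        rcases le_or_gt i i0x with hle | hlt
        · have := hz1max i (by omega) hle h0
          omega
        · have := hz2min i (by omega) (by omega) h0
          omega
      · intro i h1 h2; exact gAall i
      · intro i h1 h2; exact gBall i
      · intro i hi; exfalso; omega
      · intro i hi
        rw [show z1 + 1 = 2*i + 1 by omega, gBall i, show 2*i = z1 by omega, hgz1]
      · intro i hi; exfalso; omega
      · intro i hi
        rw [show z2 - 1 = 2*i - 1 by omega, gAall i, show 2*i = z2 by omega, hgz2]
end
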